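/- arXiv:1812.11781 — 5 statements merged into one kernel-verified Lean document; each statement's English description precedes it below -/
import Mathlib

section
/- Let (X, μ) be an atomless σ-finite non-zero measure space and N a Young–Orlicz function. Then Y(N) := sup{ ‖f‖_{sL(N)} / ‖f‖_{wL(N)} : f ∈ wL(N), f ≠ 0 } is finite if and only if there exists a constant C ∈ (0, ∞) such that the Lebesgue–Stieltjes integral ∫₀^∞ N(C t) |dV[N](t)| is finite (equivalently, J(N) := inf_{C>0} ∫₀^∞ N(C t) |dV[N](t)| < ∞). -/
open MeasureTheory ENNReal Set Filter Topology

/-- A Young–Orlicz function: even, continuous, convex, non-negative, strictly increasing to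
infinity on `[0, ∞)`, with `N u / u → 0` as `u → 0⁺` and `N u / u → ∞` as `u → ∞`. -/
structure IsYoungOrlicz (N : ℝ → ℝ) : Prop where
  even : ∀ u, N (-u) = N u
  continuous : Continuous N
  convexOn : ConvexOn ℝ Set.univ N
  nonneg : ∀ u, 0 ≤ N u
  strictMonoOn : StrictMonoOn N (Set.Ici 0)
  tendsto_atTop : Filter.Tendsto N Filter.atTop Filter.atTop
  tendsto_div_zero : Filter.Tendsto (fun u => N u / u) (nhdsWithin 0 (Set.Ioi 0)) (nhds 0)
  tendsto_div_atTop : Filter.Tendsto (fun u => N u / u) Filter.atTop Filter.atTop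

/-- A measure is atomless if every set of positive measure has a measurable subset of strictly
smaller positive measure. -/
def Atomless {X : Type*} [MeasurableSpace X] (μ : MeasureTheory.Measure X) : Prop :=
  ∀ s : Set X, MeasurableSet s → 0 < μ s →
    ∃ t : Set X, MeasurableSet t ∧ t ⊆ s ∧ 0 < μ t ∧ μ t < μ s

/-- The tail function `T[f](t) = μ {x : |f x| ≥ t}`. -/
noncomputable def tailFun {X : Type*} [MeasurableSpace X] (μ : MeasureTheory.Measure X)
    (f : X → ℝ) (t : ℝ) : ℝ≥0∞ :=
  μ {x | t ≤ |f x|}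

/-- `V[N](t) = min (μ X) (1 / N t)` (computed in `ℝ≥0∞`, so `1/0 = ∞`). -/
noncomputable def Vfun {X : Type*} [MeasurableSpace X] (μ : MeasureTheory.Measure X)
    (N : ℝ → ℝ) (t : ℝ) : ℝ≥0∞ :=
  min (μ Set.univ) (ENNReal.ofReal (N t))⁻¹

/-- The strong (Luxemburg) Orlicz norm, with value `∞` when `f ∉ sL(N)`. -/
noncomputable def strongNorm {X : Type*} [MeasurableSpace X] (μ : MeasureTheory.Measure X)
    (N : ℝ → ℝ) (f : X → ℝ) : ℝ≥0∞ :=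
  sInf (ENNReal.ofReal ''
    {k : ℝ | 0 < k ∧ ∫⁻ x, ENNReal.ofReal (N (|f x| / k)) ∂μ ≤ 1})

/-- The weak Orlicz (tail) norm `‖f‖_{wL(N)} = inf {K > 0 : ∀ t > 0, T[f](t) ≤ V[N](t/K)}`,
with value `∞` when `f ∉ wL(N)`. -/
noncomputable def weakNorm {X : Type*} [MeasurableSpace X] (μ : MeasureTheory.Measure X)
    (N : ℝ → ℝ) (f : X → ℝ) : ℝ≥0∞ :=
  sInf (ENNReal.ofReal ''
    {K : ℝ | 0 < K ∧ ∀ t > 0, tailFun μ f t ≤ Vfun μ N (t / K)})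

/-- `Y(N) = sup { ‖f‖_{sL(N)} / ‖f‖_{wL(N)} : f ∈ wL(N), f ≠ 0 }`. -/
noncomputable def Ynorm {X : Type*} [MeasurableSpace X] (μ : MeasureTheory.Measure X)
    (N : ℝ → ℝ) : ℝ≥0∞ :=
  ⨆ (f : X → ℝ) (_ : Measurable f) (_ : ¬ f =ᵐ[μ] (0 : X → ℝ))
    (_ : weakNorm μ N f ≠ ⊤), strongNorm μ N f / weakNorm μ N f

/-- The (generalized) inverse of a Young–Orlicz function on `[0, ∞)`. -/
noncomputable def Ninv (N : ℝ → ℝ) (w : ℝ) : ℝ :=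
  sInf {u : ℝ | 0 ≤ u ∧ w ≤ N u}

/-- `Q[N](k) = ∫_{y₀}^∞ N(y/k) |d(1/N(y))| = ∫_{1/μ(X)}^∞ N(N⁻¹(w)/k) w⁻² dw`. -/
noncomputable def Qfun {X : Type*} [MeasurableSpace X] (μ : MeasureTheory.Measure X)
    (N : ℝ → ℝ) (k : ℝ) : ℝ≥0∞ :=
  ∫⁻ w in Set.Ioi ((μ Set.univ)⁻¹.toReal), ENNReal.ofReal (N (Ninv N w / k) / w ^ 2)

/-- `G(α) = ∫₀^{1/2} (1 - z)⁻² z^{-α} dz`. -/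
noncomputable def Gfun (α : ℝ) : ℝ≥0∞ :=
  ∫⁻ z in Set.Ioo (0 : ℝ) (1/2), ENNReal.ofReal ((1 - z) ^ (-(2:ℝ)) * z ^ (-α))

namespace IsYoungOrlicz

variable {N : ℝ → ℝ} (hN : IsYoungOrlicz N)

lemma N_zero (hN : IsYoungOrlicz N) : N 0 = 0 := by
  have h1 : Tendsto (fun u : ℝ => (N u / u) * u) (𝓝[>] (0:ℝ)) (𝓝 0) := by
    have h2 : Tendsto (fun u : ℝ => u) (𝓝[>] (0:ℝ)) (𝓝 0) :=
      (continuous_id.tendsto 0).mono_left nhdsWithin_le_nhds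
    simpa using hN.tendsto_div_zero.mul h2
  have h3 : Tendsto N (𝓝[>] (0:ℝ)) (𝓝 0) := by
    apply h1.congr'
    filter_upwards [self_mem_nhdsWithin] with u hu
    exact div_mul_cancel₀ _ (ne_of_gt hu)
  have h4 : Tendsto N (𝓝[>] (0:ℝ)) (𝓝 (N 0)) :=
    (hN.continuous.tendsto 0).mono_left nhdsWithin_le_nhds
  exact (tendsto_nhds_unique h4 h3)

lemma N_pos (hN : IsYoungOrlicz N) {t : ℝ} (ht : 0 < t) : 0 < N t := by
  have := hN.strictMonoOn (le_refl (0:ℝ)) (le_of_lt ht : (0:ℝ) ≤ t) ht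
  rwa [hN.N_zero] at this

lemma ninv_mem (hN : IsYoungOrlicz N) (w : ℝ) : Ninv N w ∈ {u : ℝ | 0 ≤ u ∧ w ≤ N u} := by
  have hne : {u : ℝ | 0 ≤ u ∧ w ≤ N u}.Nonempty := by
    obtain ⟨u, hu0, hu⟩ :=
      ((eventually_ge_atTop (0:ℝ)).and (hN.tendsto_atTop.eventually_ge_atTop w)).exists
    exact ⟨u, hu0, hu⟩
  have hcl : IsClosed {u : ℝ | 0 ≤ u ∧ w ≤ N u} := by
    have : {u : ℝ | 0 ≤ u ∧ w ≤ N u} = Ici 0 ∩ N ⁻¹' (Ici w) := rfl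
    rw [this]; exact isClosed_Ici.inter (isClosed_Ici.preimage hN.continuous)
  exact hcl.csInf_mem hne ⟨0, fun u hu => hu.1⟩

lemma ninv_nonneg (hN : IsYoungOrlicz N) (w : ℝ) : 0 ≤ Ninv N w := (hN.ninv_mem w).1

lemma le_N_iff (hN : IsYoungOrlicz N) {w u : ℝ} (hu : 0 ≤ u) : w ≤ N u ↔ Ninv N w ≤ u := by
  constructor
  · intro h; exact csInf_le ⟨0, fun v hv => hv.1⟩ ⟨hu, h⟩
  · intro h
    obtain ⟨h0, hw⟩ := hN.ninv_mem w
    exact hw.trans (hN.strictMonoOn.monotoneOn h0 hu h)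

lemma ninv_pos (hN : IsYoungOrlicz N) {w : ℝ} (hw : 0 < w) : 0 < Ninv N w := by
  rcases (hN.ninv_nonneg w).lt_or_eq with h | h
  · exact h
  · exfalso
    have := (hN.ninv_mem w).2
    rw [← h, hN.N_zero] at this
    exact absurd this (not_le.2 hw)

end IsYoungOrlicz

section VfunLemmas
variable {X : Type*} [MeasurableSpace X] {μ : Measure X} {N : ℝ → ℝ}

lemma vfun_anti (hN : IsYoungOrlicz N) {a b : ℝ} (ha : 0 ≤ a) (hab : a ≤ b) :
    Vfun μ N b ≤ Vfun μ N a := by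
  apply min_le_min le_rfl
  exact ENNReal.inv_le_inv.2
    (ofReal_le_ofReal (hN.strictMonoOn.monotoneOn ha (ha.trans hab) hab))

lemma vfun_ne_top (hN : IsYoungOrlicz N) {t : ℝ} (ht : 0 < t) : Vfun μ N t ≠ ⊤ := by
  have h : (ENNReal.ofReal (N t))⁻¹ ≠ ⊤ := by
    simp [ENNReal.inv_ne_top, (ofReal_pos.2 (hN.N_pos ht)).ne']
  exact ne_top_of_le_ne_top h (min_le_right _ _)

lemma vfun_pos (hμ0 : μ ≠ 0) (t : ℝ) : 0 < Vfun μ N t := by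
  apply lt_min
  · exact Measure.measure_univ_pos.2 hμ0
  · exact ENNReal.inv_pos.2 ofReal_ne_top

lemma layer_mu (hN : IsYoungOrlicz N) (f : X → ℝ) (hf : Measurable f) {k : ℝ} (hk : 0 < k) :
    ∫⁻ x, ENNReal.ofReal (N (|f x| / k)) ∂μ
      = ∫⁻ s in Ioi (0:ℝ), tailFun μ f (k * Ninv N s) := by
  rw [lintegral_eq_lintegral_meas_le μ (ae_of_all μ fun x => hN.nonneg _)
    ((hN.continuous.measurable.comp ((hf.abs).div_const k)).aemeasurable)]
  apply lintegral_congr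
  intro s
  unfold tailFun
  congr 1
  ext x
  simp only [mem_setOf_eq]
  rw [hN.le_N_iff (div_nonneg (abs_nonneg _) hk.le), le_div_iff₀ hk, mul_comm]

lemma layer_nu (hN : IsYoungOrlicz N) (ν : Measure ℝ) (C : ℝ) :
    ∫⁻ t in Ioi (0:ℝ), ENNReal.ofReal (N (C * t)) ∂ν
      = ∫⁻ s in Ioi (0:ℝ), ν ({t : ℝ | s ≤ N (C * t)} ∩ Ioi 0) := by
  have hm : Measurable fun t : ℝ => N (C * t) :=
    (hN.continuous.comp (continuous_const.mul continuous_id)).measurable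
  rw [lintegral_eq_lintegral_meas_le (ν.restrict (Ioi 0))
      (ae_of_all _ fun t => hN.nonneg _) hm.aemeasurable]
  apply lintegral_congr
  intro s
  rw [Measure.restrict_apply (measurableSet_le measurable_const hm)]

end VfunLemmas

section Sierpinski
variable {X : Type*} [MeasurableSpace X] {μ : Measure X}

lemma exists_small_subset (hat : Atomless μ) {s : Set X} (hs : MeasurableSet s)
    (h0 : 0 < μ s) (hfin : μ s ≠ ⊤) {ε : ℝ≥0∞} (hε : 0 < ε) :
    ∃ t, MeasurableSet t ∧ t ⊆ s ∧ 0 < μ t ∧ μ t ≤ ε := by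
  have key : ∀ n : ℕ, ∃ t, MeasurableSet t ∧ t ⊆ s ∧ 0 < μ t ∧ μ t ≤ μ s / 2 ^ n := by
    intro n
    induction n with
    | zero => exact ⟨s, hs, subset_rfl, h0, by simp⟩
    | succ n ih =>
      obtain ⟨t, ht, hts, ht0, htle⟩ := ih
      have htfin : μ t ≠ ⊤ := by
        refine ne_top_of_le_ne_top ?_ htle
        exact (ENNReal.div_lt_top hfin (by positivity)).ne
      obtain ⟨u, hu, hut, hu0, hult⟩ := hat t ht ht0
      have hdiv : μ t / 2 ≤ μ s / 2 ^ (n + 1) := by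
        calc μ t / 2 ≤ (μ s / 2 ^ n) / 2 := ENNReal.div_le_div_right htle 2
        _ = μ s / 2 ^ (n + 1) := by
            rw [div_eq_mul_inv, div_eq_mul_inv, div_eq_mul_inv, mul_assoc,
              ← ENNReal.mul_inv (Or.inl (by positivity)) (Or.inl (by simp)), ← pow_succ]
      by_cases hcase : μ u ≤ μ t / 2
      · exact ⟨u, hu, hut.trans hts, hu0, hcase.trans hdiv⟩
      · refine ⟨t \ u, ht.diff hu, diff_subset.trans hts, ?_, ?_⟩
        · rw [measure_diff hut hu.nullMeasurableSet (ne_top_of_le_ne_top htfin hult.le)]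
          exact tsub_pos_iff_lt.2 hult
        · rw [measure_diff hut hu.nullMeasurableSet (ne_top_of_le_ne_top htfin hult.le)]
          calc μ t - μ u ≤ μ t - μ t / 2 := tsub_le_tsub_left (not_le.1 hcase).le _
          _ = μ t / 2 := ENNReal.sub_half htfin
          _ ≤ μ s / 2 ^ (n + 1) := hdiv
  rcases eq_top_or_lt_top ε with hε' | hε'
  · obtain ⟨t, h1, h2, h3, _⟩ := key 0
    exact ⟨t, h1, h2, h3, by simp [hε']⟩
  · have hεne : ε ≠ 0 := hε.ne'
    obtain ⟨n, hn⟩ := ENNReal.exists_nat_gt ((ENNReal.div_lt_top hfin hεne).ne)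
    have h2n : (n : ℝ≥0∞) ≤ 2 ^ n := by
      exact_mod_cast (Nat.lt_two_pow_self (n := n)).le
    have hlt : μ s / ε < 2 ^ n := lt_of_lt_of_le hn h2n
    have hle : μ s / 2 ^ n ≤ ε := by
      rw [ENNReal.div_le_iff_le_mul (Or.inl (by positivity)) (Or.inl (by simp))]
      rw [ENNReal.div_lt_iff (Or.inl hεne) (Or.inl hε'.ne)] at hlt
      exact hlt.le.trans (by rw [mul_comm])
    obtain ⟨t, h1, h2, h3, h4⟩ := key n
    exact ⟨t, h1, h2, h3, h4.trans hle⟩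

theorem sierpinski [SigmaFinite μ] (hat : Atomless μ) {s : Set X} (hs : MeasurableSet s)
    {c : ℝ≥0∞} (hc : c ≤ μ s) (hct : c ≠ ⊤) :
    ∃ t, MeasurableSet t ∧ t ⊆ s ∧ μ t = c := by
  classical
  -- step function
  have step : ∀ t : Set X, MeasurableSet t → t ⊆ s → μ t ≤ c →
      ∃ t' : Set X, (MeasurableSet t' ∧ t' ⊆ s ∧ μ t' ≤ c) ∧ t ⊆ t' ∧ μ t' ≠ ⊤ ∧
        ∀ u, MeasurableSet u → u ⊆ s \ t → μ u ≤ c - μ t → μ u ≤ 2 * (μ t' - μ t) := by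
    intro t htm hts htc
    have htfin : μ t ≠ ⊤ := ne_top_of_le_ne_top hct htc
    set P := {u : Set X | MeasurableSet u ∧ u ⊆ s \ t ∧ μ u ≤ c - μ t} with hP
    set δ := sSup ((fun u => μ u) '' P) with hδ
    by_cases hδ0 : δ = 0
    · refine ⟨t, ⟨htm, hts, htc⟩, subset_rfl, htfin, fun u hu hus huc => ?_⟩
      have h1 : μ u ≤ δ := le_sSup ⟨u, ⟨hu, hus, huc⟩, rfl⟩
      rw [hδ0] at h1
      simp [le_zero_iff.1 h1]
    · have hδle : δ ≤ c - μ t := by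
        apply sSup_le
        rintro _ ⟨u, ⟨_, _, huc⟩, rfl⟩
        exact huc
      have hδtop : δ ≠ ⊤ := ne_top_of_le_ne_top (ne_top_of_le_ne_top hct tsub_le_self) hδle
      have hhalf : δ / 2 < δ := ENNReal.half_lt_self hδ0 hδtop
      obtain ⟨_, ⟨u, hu, rfl⟩, hgt⟩ := lt_sSup_iff.mp hhalf
      obtain ⟨hum, hus, huc⟩ := hu
      have hdisj : Disjoint t u := by
        rw [Set.disjoint_left]
        intro x hx hxu
        exact (hus hxu).2 hx
      have hμunion : μ (t ∪ u) = μ t + μ u := measure_union hdisj hum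
      refine ⟨t ∪ u, ⟨htm.union hum, union_subset hts (hus.trans diff_subset), ?_⟩,
        subset_union_left, ?_, ?_⟩
      · rw [hμunion]
        calc μ t + μ u ≤ μ t + (c - μ t) := add_le_add_right huc _
        _ = c := add_tsub_cancel_of_le htc
      · rw [hμunion]
        exact ENNReal.add_ne_top.2 ⟨htfin, ne_top_of_le_ne_top hδtop (le_sSup ⟨u, ⟨hum, hus, huc⟩, rfl⟩)⟩
      · intro u' hu' hus' huc'
        have h1 : μ u' ≤ δ := le_sSup ⟨u', ⟨hu', hus', huc'⟩, rfl⟩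
        have h2 : μ (t ∪ u) - μ t = μ u := by
          rw [hμunion, ENNReal.add_sub_cancel_left htfin]
        rw [h2]
        calc μ u' ≤ δ := h1
        _ = 2 * (δ / 2) := (ENNReal.mul_div_cancel' (by norm_num) (by norm_num)).symm
        _ ≤ 2 * μ u := mul_le_mul_right hgt.le _
  -- the recursively defined chain
  let St := {t : Set X // MeasurableSet t ∧ t ⊆ s ∧ μ t ≤ c}
  let next : St → St := fun t =>
    ⟨Classical.choose (step t.1 t.2.1 t.2.2.1 t.2.2.2),
     (Classical.choose_spec (step t.1 t.2.1 t.2.2.1 t.2.2.2)).1⟩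
  let F : ℕ → St := fun n =>
    Nat.rec (⟨∅, MeasurableSet.empty, empty_subset _, by simp⟩ : St) (fun _ t => next t) n
  have hFsucc : ∀ n, F (n + 1) = next (F n) := fun n => rfl
  have hmono : ∀ n, (F n).1 ⊆ (F (n + 1)).1 := by
    intro n
    rw [hFsucc n]
    exact (Classical.choose_spec (step (F n).1 (F n).2.1 (F n).2.2.1 (F n).2.2.2)).2.1
  have hMono : Monotone fun n => (F n).1 := monotone_nat_of_le_succ hmono
  set T := ⋃ n, (F n).1 with hT
  have hTm : MeasurableSet T := MeasurableSet.iUnion fun n => (F n).2.1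
  have hTs : T ⊆ s := iUnion_subset fun n => (F n).2.2.1
  have hTle : μ T ≤ c := by
    rw [hT, hMono.directed_le.measure_iUnion]
    exact iSup_le fun n => (F n).2.2.2
  by_cases hTc : μ T = c
  · exact ⟨T, hTm, hTs, hTc⟩
  exfalso
  have hTlt : μ T < c := lt_of_le_of_ne hTle hTc
  have hTfin : μ T ≠ ⊤ := ne_top_of_le_ne_top hct hTle
  have h1 : 0 < μ (s \ T) := by
    by_contra h
    push_neg at h
    have h0 : μ (s \ T) = 0 := le_zero_iff.1 h
    have : μ s ≤ μ T := by
      calc μ s ≤ μ (T ∪ (s \ T)) := measure_mono (fun x hx => by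
        by_cases hxT : x ∈ T
        · exact Or.inl hxT
        · exact Or.inr ⟨hx, hxT⟩)
      _ ≤ μ T + μ (s \ T) := measure_union_le _ _
      _ = μ T := by rw [h0, add_zero]
    exact absurd (hc.trans this) (not_le.2 hTlt)
  obtain ⟨u₁, hu₁m, hu₁s, hu₁0, hu₁fin⟩ :=
    Measure.exists_subset_measure_lt_top (hs.diff hTm) h1
  obtain ⟨u, hum, huu₁, hu0, hule⟩ :=
    exists_small_subset hat hu₁m hu₁0 hu₁fin.ne (tsub_pos_iff_lt.2 hTlt : (0:ℝ≥0∞) < c - μ T)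
  have hus : u ⊆ s \ T := huu₁.trans hu₁s
  have hufin : μ u ≠ ⊤ := ne_top_of_le_ne_top (ne_top_of_le_ne_top hct tsub_le_self) hule
  -- u is a candidate for every step
  have hstep : ∀ n, μ (F n).1 + μ u / 2 ≤ μ (F (n + 1)).1 := by
    intro n
    have hFn := Classical.choose_spec (step (F n).1 (F n).2.1 (F n).2.2.1 (F n).2.2.2)
    have husn : u ⊆ s \ (F n).1 := by
      refine hus.trans ?_
      exact diff_subset_diff_right (subset_iUnion (fun n => (F n).1) n)
    have hucn : μ u ≤ c - μ (F n).1 := by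
      refine hule.trans (tsub_le_tsub_left ?_ c)
      exact measure_mono (subset_iUnion (fun n => (F n).1) n)
    have h2 := hFn.2.2.2 u hum husn hucn
    have hF1 : (F (n + 1)).1 = Classical.choose (step (F n).1 (F n).2.1 (F n).2.2.1 (F n).2.2.2) :=
      rfl
    rw [← hF1] at h2
    have h3 : μ u / 2 ≤ μ (F (n + 1)).1 - μ (F n).1 := by
      rw [ENNReal.div_le_iff_le_mul (Or.inl (by norm_num)) (Or.inl (by norm_num))]
      rw [mul_comm] at h2
      exact h2
    have h4 : μ (F n).1 ≤ μ (F (n + 1)).1 := measure_mono (hmono n)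
    calc μ (F n).1 + μ u / 2 ≤ μ (F n).1 + (μ (F (n + 1)).1 - μ (F n).1) :=
          add_le_add_right h3 _
    _ = μ (F (n + 1)).1 := add_tsub_cancel_of_le h4
  have hlow : ∀ n : ℕ, (n : ℝ≥0∞) * (μ u / 2) ≤ μ (F n).1 := by
    intro n
    induction n with
    | zero => simp
    | succ n ih =>
      calc ((n + 1 : ℕ) : ℝ≥0∞) * (μ u / 2) = (n : ℝ≥0∞) * (μ u / 2) + μ u / 2 := by
            push_cast; ring
      _ ≤ μ (F n).1 + μ u / 2 := add_le_add_left ih _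
      _ ≤ μ (F (n + 1)).1 := hstep n
  have hbound : ∀ n : ℕ, (n : ℝ≥0∞) * (μ u / 2) ≤ c := fun n => (hlow n).trans (F n).2.2.2
  have ha0 : μ u / 2 ≠ 0 := by
    simp only [ne_eq, ENNReal.div_eq_zero_iff]
    push_neg
    exact ⟨hu0.ne', by norm_num⟩
  have hatop : μ u / 2 ≠ ⊤ := (ENNReal.div_lt_top hufin (by norm_num)).ne
  obtain ⟨n, hn⟩ := ENNReal.exists_nat_gt ((ENNReal.div_lt_top hct ha0).ne)
  rw [ENNReal.div_lt_iff (Or.inl ha0) (Or.inl hatop)] at hn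
  exact absurd (hbound n) (not_le.2 hn)

end Sierpinski

/-- Generic chain recursion with choice, keeping a relation between consecutive elements. -/
noncomputable def natChain {α : Type*} (R : ℕ → α → Prop) (S : ℕ → α → α → Prop)
    (a0 : α) (h0 : R 0 a0)
    (step : ∀ n a, R n a → ∃ b, R (n + 1) b ∧ S n a b) : (n : ℕ) → {a : α // R n a}
  | 0 => ⟨a0, h0⟩
  | n + 1 =>
      let p := natChain R S a0 h0 step n
      ⟨Classical.choose (step n p.1 p.2), (Classical.choose_spec (step n p.1 p.2)).1⟩

theorem natChain_succ_prop {α : Type*} (R : ℕ → α → Prop) (S : ℕ → α → α → Prop)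
    (a0 : α) (h0 : R 0 a0)
    (step : ∀ n a, R n a → ∃ b, R (n + 1) b ∧ S n a b) (n : ℕ) :
    S n (natChain R S a0 h0 step n).1 (natChain R S a0 h0 step (n + 1)).1 :=
  (Classical.choose_spec (step n (natChain R S a0 h0 step n).1
    (natChain R S a0 h0 step n).2)).2

section Family
variable {X : Type*} [MeasurableSpace X] {μ : Measure X} {N : ℝ → ℝ}

lemma exists_grid_family [SigmaFinite μ] (hat : Atomless μ) (hN : IsYoungOrlicz N) :
    ∃ A : ℤ → Set X, (∀ m, MeasurableSet (A m)) ∧ (∀ m, A (m + 1) ⊆ A m) ∧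
      (∀ m, μ (A m) = Vfun μ N ((2:ℝ) ^ m)) := by
  classical
  set v : ℤ → ℝ≥0∞ := fun m => Vfun μ N ((2:ℝ) ^ m) with hv
  have hvanti : ∀ {m m' : ℤ}, m ≤ m' → v m' ≤ v m := by
    intro m m' h
    exact vfun_anti hN (le_of_lt (zpow_pos two_pos m)) (zpow_le_zpow_right₀ one_le_two h)
  have hvle : ∀ m, v m ≤ μ univ := fun m => min_le_left _ _
  have hvfin : ∀ m, v m ≠ ⊤ := fun m => vfun_ne_top hN (zpow_pos two_pos m)
  obtain ⟨A0, hA0m, -, hA0μ⟩ := sierpinski hat MeasurableSet.univ (hvle 0) (hvfin 0)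
  -- positive direction (shrinking sets)
  have stepB : ∀ (n : ℕ) (t : Set X), (MeasurableSet t ∧ μ t = v n) →
      ∃ t', (MeasurableSet t' ∧ μ t' = v (n + 1 : ℕ)) ∧ t' ⊆ t := by
    intro n t ⟨htm, htμ⟩
    have hle : v ((n + 1 : ℕ) : ℤ) ≤ μ t := by
      rw [htμ]
      exact hvanti (by exact_mod_cast Nat.le_succ n)
    obtain ⟨t', h1, h2, h3⟩ := sierpinski hat htm hle (hvfin _)
    exact ⟨t', ⟨h1, by rw [h3]⟩, h2⟩
  -- negative direction (growing sets)
  have stepC : ∀ (n : ℕ) (t : Set X), (MeasurableSet t ∧ μ t = v (-(n : ℤ))) →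
      ∃ t', (MeasurableSet t' ∧ μ t' = v (-((n + 1 : ℕ) : ℤ))) ∧ t ⊆ t' := by
    intro n t ⟨htm, htμ⟩
    have hle : v (-((n + 1 : ℕ) : ℤ)) - v (-(n : ℤ)) ≤ μ (univ \ t) := by
      rw [tsub_le_iff_right]
      calc v (-((n + 1 : ℕ) : ℤ)) ≤ μ univ := hvle _
      _ ≤ μ (univ \ t) + μ t := by
          refine (measure_mono ?_).trans (measure_union_le _ _)
          intro x _
          by_cases hx : x ∈ t
          · exact Or.inr hx
          · exact Or.inl ⟨trivial, hx⟩
      _ = μ (univ \ t) + v (-(n : ℤ)) := by rw [htμ]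
    obtain ⟨w, hwm, hws, hwμ⟩ := sierpinski hat (MeasurableSet.univ.diff htm) hle
      (ne_top_of_le_ne_top (hvfin _) tsub_le_self)
    refine ⟨t ∪ w, ⟨htm.union hwm, ?_⟩, subset_union_left⟩
    have hdisj : Disjoint t w := by
      rw [Set.disjoint_left]
      intro x hx hxw
      exact (hws hxw).2 hx
    rw [measure_union hdisj hwm, htμ, hwμ,
      add_tsub_cancel_of_le (hvanti (by omega : -((n+1:ℕ):ℤ) ≤ -(n:ℤ)))]
  set B := natChain (fun n t => MeasurableSet t ∧ μ t = v n) (fun _ t t' => t' ⊆ t)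
    A0 ⟨hA0m, by exact_mod_cast hA0μ⟩ stepB with hB
  set Cc := natChain (fun n t => MeasurableSet t ∧ μ t = v (-(n : ℤ))) (fun _ t t' => t ⊆ t')
    A0 ⟨hA0m, by simpa using hA0μ⟩ stepC with hC
  have hBsucc : ∀ n : ℕ, (B (n + 1)).1 ⊆ (B n).1 := fun n =>
    natChain_succ_prop (fun n t => MeasurableSet t ∧ μ t = v (n : ℤ)) (fun _ t t' => t' ⊆ t)
      A0 ⟨hA0m, by exact_mod_cast hA0μ⟩ stepB n
  have hCsucc : ∀ n : ℕ, (Cc n).1 ⊆ (Cc (n + 1)).1 := fun n =>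
    natChain_succ_prop (fun n t => MeasurableSet t ∧ μ t = v (-(n : ℤ))) (fun _ t t' => t ⊆ t')
      A0 ⟨hA0m, by simpa using hA0μ⟩ stepC n
  refine ⟨fun m => if 0 ≤ m then (B m.toNat).1 else (Cc (-m).toNat).1, ?_, ?_, ?_⟩
  · intro m
    by_cases h : 0 ≤ m
    · simp only [if_pos h]
      exact (B m.toNat).2.1
    · simp only [if_neg h]
      exact (Cc (-m).toNat).2.1
  · intro m
    by_cases h : 0 ≤ m
    · have h1 : 0 ≤ m + 1 := by omega
      simp only [if_pos h, if_pos h1]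
      have h2 : (m + 1).toNat = m.toNat + 1 := by omega
      rw [h2]
      exact hBsucc m.toNat
    · by_cases h1 : 0 ≤ m + 1
      · -- m = -1
        have hm : m = -1 := by omega
        subst hm
        simp only [if_pos h1, if_neg h]
        have h3 : ((-1 : ℤ) + 1).toNat = 0 := by omega
        have h4 : (-(-1 : ℤ)).toNat = 1 := by omega
        rw [h3, h4]
        have e1 : (B 0).1 = (Cc 0).1 := rfl
        rw [e1]
        exact hCsucc 0
      · simp only [if_neg h, if_neg h1]
        have h2 : (-m).toNat = (-(m + 1)).toNat + 1 := by omega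
        rw [h2]
        exact hCsucc (-(m + 1)).toNat
  · intro m
    by_cases h : 0 ≤ m
    · simp only [if_pos h]
      calc μ (B m.toNat).1 = v ((m.toNat : ℕ) : ℤ) := (B m.toNat).2.2
      _ = v m := congrArg v (by omega)
    · simp only [if_neg h]
      calc μ (Cc (-m).toNat).1 = v (-(((-m).toNat : ℕ) : ℤ)) := (Cc (-m).toNat).2.2
      _ = v m := congrArg v (by omega)

end Family

section Extremal
variable {X : Type*} [MeasurableSpace X] {μ : Measure X} {N : ℝ → ℝ}

lemma exists_extremal [SigmaFinite μ] (hat : Atomless μ) (hN : IsYoungOrlicz N) :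
    ∃ f : X → ℝ, Measurable f ∧ (∀ t, 0 < t → tailFun μ f t ≤ Vfun μ N t) ∧
      (∀ t, 0 < t → Vfun μ N (2 * t) ≤ tailFun μ f t) := by
  classical
  obtain ⟨A, hAm, hAstep, hAμ⟩ := exists_grid_family hat hN
  have hAanti : Antitone A := antitone_int_of_succ_le hAstep
  set E : ℤ → Set X := fun m => A m \ A (m + 1) with hE
  have hEm : ∀ m, MeasurableSet (E m) := fun m => (hAm m).diff (hAm (m + 1))
  have hdisj : ∀ {m m' : ℤ}, m ≠ m' → ∀ {x : X}, x ∈ E m → x ∉ E m' := by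
    intro m m' hne x hx hx'
    rcases lt_or_gt_of_ne hne with h | h
    · -- m < m' : x ∉ A (m+1) ⊇ A m'
      exact hx.2 (hAanti (by omega : m + 1 ≤ m') hx'.1)
    · -- m' < m : x ∈ A m ⊆ A (m'+1)
      exact hx'.2 (hAanti (by omega : m' + 1 ≤ m) hx.1)
  set g : X → ℝ≥0∞ :=
    fun x => ∑' m : ℤ, (E m).indicator (fun _ => ENNReal.ofReal ((2:ℝ) ^ m)) x with hg
  have hgm : Measurable g :=
    Measurable.ennreal_tsum fun m => measurable_const.indicator (hEm m)
  set f : X → ℝ := fun x => (g x).toReal with hf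
  have hfm : Measurable f := hgm.ennreal_toReal
  have hfE : ∀ (m : ℤ) (x : X), x ∈ E m → f x = (2:ℝ) ^ m := by
    intro m x hx
    have h1 : g x = ENNReal.ofReal ((2:ℝ) ^ m) := by
      have e : g x = ∑' m : ℤ, (E m).indicator (fun _ => ENNReal.ofReal ((2:ℝ) ^ m)) x := rfl
      rw [e, tsum_eq_single m (fun m' hm' => indicator_of_notMem (hdisj (Ne.symm hm') hx) _)]
      exact indicator_of_mem hx _
    rw [hf]
    simp only [h1, toReal_ofReal (zpow_pos two_pos m).le]
  have hf0 : ∀ x : X, x ∉ (⋃ m : ℤ, E m) → f x = 0 := by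
    intro x hx
    have h1 : g x = 0 := by
      have e : g x = ∑' m : ℤ, (E m).indicator (fun _ => ENNReal.ofReal ((2:ℝ) ^ m)) x := rfl
      rw [e]
      have e2 : ∀ m : ℤ, (E m).indicator (fun _ => ENNReal.ofReal ((2:ℝ) ^ m)) x = 0 := by
        intro m
        apply indicator_of_notMem
        intro h
        exact hx (mem_iUnion.2 ⟨m, h⟩)
      simp only [e2, tsum_zero]
    rw [hf]; simp [h1]
  set I : Set X := ⋂ m : ℤ, A m with hI
  have hIfin : μ I ≠ ⊤ := by
    refine ne_top_of_le_ne_top (vfun_ne_top (μ := μ) hN (zpow_pos two_pos 0)) ?_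
    rw [← hAμ 0]
    exact measure_mono (iInter_subset _ 0)
  have hI0 : μ I = 0 := by
    have key : ∀ ε : ℝ≥0∞, 0 < ε → μ I ≤ ε := by
      intro ε hε
      rcases eq_top_or_lt_top ε with h | h
      · simp [h]
      · have hεinv : ε⁻¹ ≠ ⊤ := ENNReal.inv_ne_top.2 hε.ne'
        set r := ε⁻¹.toReal with hr
        obtain ⟨u₀, hu₀r, hu₀0⟩ :=
          ((hN.tendsto_atTop.eventually_ge_atTop r).and (eventually_ge_atTop (0:ℝ))).exists
        obtain ⟨n, hn⟩ := pow_unbounded_of_one_lt u₀ (one_lt_two : (1:ℝ) < 2)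
        have hmono : N u₀ ≤ N ((2:ℝ) ^ (n : ℤ)) := by
          rw [zpow_natCast]
          exact hN.strictMonoOn.monotoneOn hu₀0 (hu₀0.trans hn.le) hn.le
        have h1 : ε⁻¹ ≤ ENNReal.ofReal (N ((2:ℝ) ^ (n : ℤ))) := by
          calc ε⁻¹ = ENNReal.ofReal r := (ofReal_toReal hεinv).symm
          _ ≤ _ := ofReal_le_ofReal (hu₀r.trans hmono)
        have h2 : (ENNReal.ofReal (N ((2:ℝ) ^ (n : ℤ))))⁻¹ ≤ ε := by
          rw [← inv_inv ε]
          exact ENNReal.inv_le_inv.2 h1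
        calc μ I ≤ μ (A (n : ℤ)) := measure_mono (iInter_subset _ _)
        _ = Vfun μ N ((2:ℝ) ^ (n : ℤ)) := hAμ _
        _ ≤ (ENNReal.ofReal (N ((2:ℝ) ^ (n : ℤ))))⁻¹ := min_le_right _ _
        _ ≤ ε := h2
    by_contra h0
    have hpos : 0 < μ I := pos_iff_ne_zero.2 h0
    have := key (μ I / 2) (ENNReal.half_pos h0)
    exact absurd this (not_le.2 (ENNReal.half_lt_self h0 hIfin))
  have tail_eq : ∀ t : ℝ, 0 < t → ∃ n : ℤ, (2:ℝ) ^ n < t ∧ t ≤ (2:ℝ) ^ (n + 1) ∧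
      tailFun μ f t = Vfun μ N ((2:ℝ) ^ (n + 1)) := by
    intro t ht
    obtain ⟨n, hn1, hn2⟩ := exists_mem_Ioc_zpow ht (one_lt_two : (1:ℝ) < 2)
    refine ⟨n, hn1, hn2, ?_⟩
    have hset : {x : X | t ≤ |f x|} = A (n + 1) \ I := by
      ext x
      simp only [mem_setOf_eq, mem_diff]
      constructor
      · intro hx
        have hx0 : x ∈ ⋃ m : ℤ, E m := by
          by_contra h
          rw [hf0 x h] at hx
          simp only [abs_zero] at hx
          linarith
        obtain ⟨m, hm⟩ := mem_iUnion.1 hx0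
        have hfx : f x = (2:ℝ) ^ m := hfE m x hm
        rw [hfx, abs_of_nonneg (zpow_pos two_pos m).le] at hx
        have hnm : n + 1 ≤ m := by
          by_contra hcon
          push_neg at hcon
          have : (2:ℝ) ^ m ≤ (2:ℝ) ^ n :=
            zpow_le_zpow_right₀ one_le_two (by omega)
          linarith
        refine ⟨hAanti hnm hm.1, fun hxI => ?_⟩
        exact hm.2 (mem_iInter.1 hxI (m + 1))
      · rintro ⟨hxA, hxI⟩
        have hm₁ : ∃ m₁ : ℤ, x ∉ A m₁ := by
          by_contra hcon
          push_neg at hcon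
          exact hxI (mem_iInter.2 hcon)
        obtain ⟨m₁, hm₁⟩ := hm₁
        obtain ⟨M, hM1, hM2⟩ := Int.exists_greatest_of_bdd
          (Hbdd := ⟨m₁, fun z hz => by
            by_contra hzc
            push_neg at hzc
            exact hm₁ (hAanti hzc.le hz)⟩)
          (Hinh := ⟨n + 1, hxA⟩)
        have hxE : x ∈ E M := ⟨hM1, fun hc => by have := hM2 (M + 1) hc; omega⟩
        rw [hfE M x hxE, abs_of_nonneg (zpow_pos two_pos M).le]
        calc t ≤ (2:ℝ) ^ (n + 1) := hn2
        _ ≤ (2:ℝ) ^ M := zpow_le_zpow_right₀ one_le_two (hM2 (n + 1) hxA)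
    unfold tailFun
    rw [hset, measure_diff_null hI0, hAμ (n + 1)]
  refine ⟨f, hfm, ?_, ?_⟩ <;> intro t ht <;> obtain ⟨n, hn1, hn2, hn3⟩ := tail_eq t ht
  · rw [hn3]
    exact vfun_anti hN ht.le hn2
  · rw [hn3]
    refine vfun_anti hN (_root_.zpow_pos two_pos _).le ?_
    have e : (2:ℝ) ^ (n + 1) = 2 * (2:ℝ) ^ n := by
      rw [zpow_add_one₀ (two_ne_zero : (2:ℝ) ≠ 0)]; ring
    rw [e]
    linarith

end Extremal

theorem strong_weak_coincidence_iff
    {X : Type*} [MeasurableSpace X] (μ : MeasureTheory.Measure X) [SigmaFinite μ]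
    (hμ0 : μ ≠ 0) (hatomless : Atomless μ)
    (N : ℝ → ℝ) (hN : IsYoungOrlicz N)
    (ν : MeasureTheory.Measure ℝ)
    (hν : ∀ t : ℝ, 0 < t → ν (Set.Ioi t) = Vfun μ N t) :
    Ynorm μ N < ⊤ ↔
      ∃ C : ℝ, 0 < C ∧ ∫⁻ t in Set.Ioi (0:ℝ), ENNReal.ofReal (N (C * t)) ∂ν < ⊤ := by
  constructor
  · -- forward: by contraposition
    intro hY
    by_contra hCC
    push_neg at hCC
    obtain ⟨f, hfm, htail_up, htail_low⟩ := exists_extremal hatomless hN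
    have hweak : weakNorm μ N f ≤ ENNReal.ofReal 1 := by
      apply sInf_le
      refine ⟨1, ⟨one_pos, fun t ht => ?_⟩, rfl⟩
      rw [div_one]
      exact htail_up t ht
    have hweak_ne : weakNorm μ N f ≠ ⊤ :=
      ne_top_of_le_ne_top ofReal_ne_top hweak
    have hstrong : strongNorm μ N f = ⊤ := by
      have hempty : {k : ℝ | 0 < k ∧ ∫⁻ x, ENNReal.ofReal (N (|f x| / k)) ∂μ ≤ 1} = ∅ := by
        rw [eq_empty_iff_forall_notMem]
        rintro k ⟨hk, hint⟩
        have hCk : (0:ℝ) < 1 / (4 * k) := by positivity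
        have h1 := hCC (1 / (4 * k)) hCk
        have h2 : ∫⁻ t in Ioi (0:ℝ), ENNReal.ofReal (N ((1 / (4 * k)) * t)) ∂ν
            ≤ ∫⁻ x, ENNReal.ofReal (N (|f x| / k)) ∂μ := by
          rw [layer_nu hN ν _, layer_mu hN f hfm hk]
          refine lintegral_mono_ae ?_
          rw [ae_restrict_iff' measurableSet_Ioi]
          refine ae_of_all _ fun s hs => ?_
          have hsp : (0:ℝ) < s := hs
          have hninv := hN.ninv_pos hsp
          have hsub : {t : ℝ | s ≤ N ((1 / (4 * k)) * t)} ∩ Ioi 0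
              ⊆ Ioi (2 * (k * Ninv N s)) := by
            rintro t ⟨htN, htpos⟩
            simp only [mem_setOf_eq] at htN
            have ht0 : (0:ℝ) < t := htpos
            rw [hN.le_N_iff (by positivity)] at htN
            rw [div_mul_eq_mul_div, one_mul] at htN
            have h4 := (le_div_iff₀ (by positivity : (0:ℝ) < 4 * k)).1 htN
            rw [mem_Ioi]
            nlinarith [mul_pos hk hninv]
          calc ν ({t : ℝ | s ≤ N ((1 / (4 * k)) * t)} ∩ Ioi 0)
              ≤ ν (Ioi (2 * (k * Ninv N s))) := measure_mono hsub
          _ = Vfun μ N (2 * (k * Ninv N s)) := hν _ (by positivity)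
          _ ≤ tailFun μ f (k * Ninv N s) := htail_low _ (by positivity)
        have h3 : (⊤ : ℝ≥0∞) ≤ 1 := le_trans h1 (h2.trans hint)
        simp at h3
      unfold strongNorm
      rw [hempty, image_empty, sInf_empty]
    have hfne : ¬ f =ᵐ[μ] (0 : X → ℝ) := by
      intro heq
      have h1 : μ {x | f x ≠ 0} = 0 := by
        have h := heq
        rw [Filter.EventuallyEq, ae_iff] at h
        simpa using h
      have h2 : tailFun μ f 1 ≤ μ {x | f x ≠ 0} := by
        apply measure_mono
        intro x hx
        simp only [mem_setOf_eq] at hx ⊢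
        intro h0
        rw [h0, abs_zero] at hx
        linarith
      have h3 := htail_low 1 one_pos
      have h4 := vfun_pos (μ := μ) (N := N) hμ0 (2 * 1)
      rw [h1] at h2
      exact absurd (le_trans h3 h2) (not_le.2 h4)
    have hdiv : strongNorm μ N f / weakNorm μ N f = ⊤ := by
      rw [hstrong, ENNReal.top_div_of_ne_top hweak_ne]
    have hY' : (⊤ : ℝ≥0∞) ≤ Ynorm μ N := by
      calc (⊤ : ℝ≥0∞) = strongNorm μ N f / weakNorm μ N f := hdiv.symm
      _ ≤ Ynorm μ N :=
        le_iSup_of_le f (le_iSup_of_le hfm (le_iSup_of_le hfne (le_iSup_of_le hweak_ne le_rfl)))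
    exact absurd hY (not_lt.2 hY')
  · rintro ⟨C, hC, hI⟩
    set Iν := ∫⁻ t in Ioi (0:ℝ), ENNReal.ofReal (N (C * t)) ∂ν with hIν
    set r := Iν.toReal with hr
    have hr0 : 0 ≤ r := toReal_nonneg
    set θ := min 1 (1 / (r + 1)) with hθ
    have hθ0 : 0 < θ := lt_min one_pos (by positivity)
    have hθ1 : θ ≤ 1 := min_le_left _ _
    set C' := θ * C with hC'def
    have hC' : 0 < C' := mul_pos hθ0 hC
    have hm : Measurable fun t : ℝ => ENNReal.ofReal (N (C * t)) :=
      ((hN.continuous.comp (continuous_const.mul continuous_id)).measurable).ennreal_ofReal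
    have hkey : ∫⁻ t in Ioi (0:ℝ), ENNReal.ofReal (N (C' * t)) ∂ν ≤ 1 := by
      have hconv : ∀ t : ℝ, N (C' * t) ≤ θ * N (C * t) := by
        intro t
        have h := hN.convexOn.2 (mem_univ (C * t)) (mem_univ (0:ℝ))
          hθ0.le (by linarith : (0:ℝ) ≤ 1 - θ) (by ring)
        simp only [smul_eq_mul, mul_zero, add_zero] at h
        calc N (C' * t) = N (θ * (C * t)) := by rw [hC'def]; ring_nf
        _ ≤ θ * N (C * t) + (1 - θ) * N 0 := h
        _ = θ * N (C * t) := by rw [hN.N_zero]; ring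
      calc ∫⁻ t in Ioi (0:ℝ), ENNReal.ofReal (N (C' * t)) ∂ν
          ≤ ∫⁻ t in Ioi (0:ℝ), ENNReal.ofReal θ * ENNReal.ofReal (N (C * t)) ∂ν := by
            refine lintegral_mono fun t => ?_
            rw [← ENNReal.ofReal_mul hθ0.le]
            exact ofReal_le_ofReal (hconv t)
      _ = ENNReal.ofReal θ * Iν := by
            rw [lintegral_const_mul _ hm]
      _ ≤ 1 := by
            rw [← ofReal_toReal hI.ne, ← hr, ← ENNReal.ofReal_mul hθ0.le]
            refine ENNReal.ofReal_le_one.2 ?_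
            have hθ2 : θ ≤ 1 / (r + 1) := min_le_right _ _
            calc θ * r ≤ (1 / (r + 1)) * r := mul_le_mul_of_nonneg_right hθ2 hr0
            _ ≤ 1 := by
                rw [div_mul_eq_mul_div, one_mul]
                rw [div_le_one (by positivity)]
                linarith
    have h1C' : (0:ℝ) < 1 / C' := by positivity
    have hYb : Ynorm μ N ≤ ENNReal.ofReal (1 / C') := by
      refine iSup_le fun f => iSup_le fun hfm => iSup_le fun hfne => iSup_le fun hwt => ?_
      rw [ENNReal.div_le_iff_le_mul (Or.inr ofReal_ne_top) (Or.inl hwt)]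
      set S := {K : ℝ | 0 < K ∧ ∀ t > 0, tailFun μ f t ≤ Vfun μ N (t / K)} with hS
      have hstep : ∀ K : ℝ, K ∈ S →
          strongNorm μ N f ≤ ENNReal.ofReal (1 / C') * ENNReal.ofReal K := by
        intro K hK
        obtain ⟨hKpos, hKtail⟩ := hK
        rw [← ENNReal.ofReal_mul h1C'.le]
        have hkpos : 0 < K / C' := by positivity
        rw [show (1 / C') * K = K / C' by ring]
        apply sInf_le
        refine ⟨K / C', ⟨hkpos, ?_⟩, rfl⟩
        rw [layer_mu hN f hfm hkpos]
        calc ∫⁻ s in Ioi (0:ℝ), tailFun μ f ((K / C') * Ninv N s)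
            ≤ ∫⁻ s in Ioi (0:ℝ), ν ({t : ℝ | s ≤ N (C' * t)} ∩ Ioi 0) := by
              refine lintegral_mono_ae ?_
              rw [ae_restrict_iff' measurableSet_Ioi]
              refine ae_of_all _ fun s hs => ?_
              have hsp : (0:ℝ) < s := hs
              have hninv := hN.ninv_pos hsp
              calc tailFun μ f ((K / C') * Ninv N s)
                  ≤ Vfun μ N (((K / C') * Ninv N s) / K) := hKtail _ (by positivity)
              _ = Vfun μ N (Ninv N s / C') := by
                  rw [show ((K / C') * Ninv N s) / K = Ninv N s / C' by field_simp]
              _ = ν (Ioi (Ninv N s / C')) := (hν _ (by positivity)).symm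
              _ ≤ ν ({t : ℝ | s ≤ N (C' * t)} ∩ Ioi 0) := by
                  apply measure_mono
                  intro t htmem
                  rw [mem_Ioi] at htmem
                  have ht0 : 0 < t := lt_trans (by positivity) htmem
                  refine ⟨?_, ht0⟩
                  rw [mem_setOf_eq, hN.le_N_iff (by positivity)]
                  rw [div_lt_iff₀ hC'] at htmem
                  nlinarith
        _ = ∫⁻ t in Ioi (0:ℝ), ENNReal.ofReal (N (C' * t)) ∂ν := (layer_nu hN ν C').symm
        _ ≤ 1 := hkey
      have hne0 : ENNReal.ofReal (1 / C') ≠ 0 := (ofReal_pos.2 h1C').ne'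
      have hwN : weakNorm μ N f = sInf (ENNReal.ofReal '' S) := rfl
      calc strongNorm μ N f
          ≤ ⨅ K : ℝ, ⨅ (_ : K ∈ S), ENNReal.ofReal (1 / C') * ENNReal.ofReal K :=
            le_iInf fun K => le_iInf fun hK => hstep K hK
      _ = ENNReal.ofReal (1 / C') * ⨅ K : ℝ, ⨅ (_ : K ∈ S), ENNReal.ofReal K := by
            rw [ENNReal.mul_iInf_of_ne hne0 ofReal_ne_top]
            refine iInf_congr fun K => ?_
            rw [ENNReal.mul_iInf_of_ne hne0 ofReal_ne_top]
      _ = ENNReal.ofReal (1 / C') * weakNorm μ N f := by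
            rw [hwN, sInf_image]
    exact lt_of_le_of_lt hYb ofReal_lt_top
end

section
/- Let (X, μ) be an atomless σ-finite non-zero measure space and N a Young–Orlicz function. If there exists C ∈ (0, ∞) such that ∫₀^∞ N(C t) |dV[N](t)| < ∞, then every f ∈ wL(N) belongs to sL(N); more precisely, if T[f](t) ≤ V[N](t/C₂) for all t ≥ 0 and some C₂ ∈ (0, ∞), then for every C₃ > 0 with C₂ C₃ ≤ C one has ∫_X N(C₃ |f(x)|) dμ(x) < ∞, so ‖f‖_{sL(N)} < ∞. -/
open MeasureTheory ENNReal Set Filter Topology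

theorem weak_mem_implies_strong_mem
    {X : Type*} [MeasurableSpace X] (μ : MeasureTheory.Measure X) [SigmaFinite μ]
    (hμ0 : μ ≠ 0) (hatomless : Atomless μ)
    (N : ℝ → ℝ) (hN : IsYoungOrlicz N)
    (ν : MeasureTheory.Measure ℝ)
    (hν : ∀ t : ℝ, 0 < t → ν (Set.Ioi t) = Vfun μ N t)
    (C : ℝ) (hC : 0 < C)
    (hJ : ∫⁻ t in Set.Ioi (0:ℝ), ENNReal.ofReal (N (C * t)) ∂ν < ⊤)
    (f : X → ℝ) (hf : Measurable f)
    (C₂ : ℝ) (hC₂ : 0 < C₂)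
    (hT : ∀ t : ℝ, 0 ≤ t → tailFun μ f t ≤ Vfun μ N (t / C₂)) :
    ∀ C₃ : ℝ, 0 < C₃ → C₂ * C₃ ≤ C →
      (∫⁻ x, ENNReal.ofReal (N (C₃ * |f x|)) ∂μ < ⊤) ∧ strongNorm μ N f < ⊤ := by
  intro C₃ hC₃ hCC
  have hmono : MonotoneOn N (Set.Ici 0) := hN.strictMonoOn.monotoneOn
  have hN0 : N 0 = 0 := by
    have h1 : Tendsto N (𝓝[>] (0:ℝ)) (𝓝 (N 0)) :=
      (hN.continuous.tendsto 0).mono_left nhdsWithin_le_nhds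
    have h2 : Tendsto N (𝓝[>] (0:ℝ)) (𝓝 0) := by
      have := hN.tendsto_div_zero.mul
        (tendsto_nhdsWithin_of_tendsto_nhds tendsto_id : Tendsto id (𝓝[>] (0:ℝ)) (𝓝 0))
      rw [zero_mul] at this
      refine this.congr' ?_
      filter_upwards [self_mem_nhdsWithin] with u hu
      exact div_mul_cancel₀ _ (ne_of_gt hu)
    exact tendsto_nhds_unique h1 h2
  have hSne : ∀ s : ℝ, {u : ℝ | 0 ≤ u ∧ s ≤ N u}.Nonempty := by
    intro s
    obtain ⟨u, hu⟩ := ((hN.tendsto_atTop.eventually_ge_atTop s).and (eventually_ge_atTop 0)).exists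
    exact ⟨u, hu.2, hu.1⟩
  have hSbdd : ∀ s : ℝ, BddBelow {u : ℝ | 0 ≤ u ∧ s ≤ N u} := fun s => ⟨0, fun u hu => hu.1⟩
  have hNinv_nonneg : ∀ s : ℝ, 0 ≤ Ninv N s := fun s =>
    le_csInf (hSne s) fun u hu => hu.1
  have hNinv_pos : ∀ s : ℝ, 0 < s → 0 < Ninv N s := by
    intro s hs
    have hev : ∀ᶠ u in 𝓝 (0:ℝ), N u < s := by
      have h := hN.continuous.tendsto 0
      rw [hN0] at h
      exact h.eventually_lt_const hs
    obtain ⟨δ, hδpos, hδ⟩ := Metric.eventually_nhds_iff.mp hev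
    refine lt_of_lt_of_le hδpos (le_csInf (hSne s) ?_)
    intro u hu
    by_contra hlt
    push_neg at hlt
    have hd : dist u 0 < δ := by
      rw [Real.dist_eq, sub_zero, abs_of_nonneg hu.1]; exact hlt
    exact absurd hu.2 (not_le.mpr (hδ hd))
  have hmeasg : Measurable fun x => N (C₃ * |f x|) :=
    hN.continuous.measurable.comp (measurable_const.mul hf.abs)
  have hmeash : Measurable fun t : ℝ => N (C * t) :=
    hN.continuous.measurable.comp (measurable_const.mul measurable_id)
  have layer1 : ∫⁻ x, ENNReal.ofReal (N (C₃ * |f x|)) ∂μ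
      = ∫⁻ s in Set.Ioi (0:ℝ), μ {x | s ≤ N (C₃ * |f x|)} :=
    lintegral_eq_lintegral_meas_le μ (Eventually.of_forall fun x => hN.nonneg _)
      hmeasg.aemeasurable
  have layer2 : ∫⁻ t, ENNReal.ofReal (N (C * t)) ∂(ν.restrict (Set.Ioi 0))
      = ∫⁻ s in Set.Ioi (0:ℝ), (ν.restrict (Set.Ioi 0)) {t | s ≤ N (C * t)} :=
    lintegral_eq_lintegral_meas_le _ (Eventually.of_forall fun x => hN.nonneg _)
      hmeash.aemeasurable
  have hCC' : 0 < C₂ * C₃ := mul_pos hC₂ hC₃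
  have pointwise : ∀ s ∈ Set.Ioi (0:ℝ),
      μ {x | s ≤ N (C₃ * |f x|)} ≤ (ν.restrict (Set.Ioi 0)) {t | s ≤ N (C * t)} := by
    intro s hs
    rw [Set.mem_Ioi] at hs
    set a := Ninv N s with ha
    have hapos : 0 < a := hNinv_pos s hs
    have h1 : μ {x | s ≤ N (C₃ * |f x|)} ≤ tailFun μ f (a / C₃) := by
      apply measure_mono
      intro x hx
      have hle : a ≤ C₃ * |f x| := csInf_le (hSbdd s) ⟨by positivity, hx⟩
      exact (div_le_iff₀ hC₃).mpr (by linarith)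
    have h2 : tailFun μ f (a / C₃) ≤ Vfun μ N (a / C₃ / C₂) := hT _ (by positivity)
    have h3 : Vfun μ N (a / C₃ / C₂) ≤ Vfun μ N (a / C) := by
      have harg : a / C ≤ a / C₃ / C₂ := by
        rw [div_div, mul_comm C₃ C₂]
        gcongr
      refine min_le_min le_rfl (ENNReal.inv_le_inv.mpr (ENNReal.ofReal_le_ofReal ?_))
      exact hmono (Set.mem_Ici.mpr (by positivity)) (Set.mem_Ici.mpr (by positivity)) harg
    have h4 : Vfun μ N (a / C) = ν (Set.Ioi (a / C)) := (hν _ (by positivity)).symm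
    have h5 : ν (Set.Ioi (a / C)) ≤ (ν.restrict (Set.Ioi 0)) {t | s ≤ N (C * t)} := by
      rw [Measure.restrict_apply (measurableSet_le measurable_const hmeash)]
      apply measure_mono
      intro t ht
      rw [Set.mem_Ioi] at ht
      have htpos : 0 < t := lt_trans (by positivity) ht
      refine ⟨?_, htpos⟩
      have hat : a < C * t := by
        have := (div_lt_iff₀ hC).mp ht
        linarith
      obtain ⟨u, hu, hult⟩ := exists_lt_of_csInf_lt (hSne s) hat
      exact hu.2.trans (hmono (Set.mem_Ici.mpr hu.1) (Set.mem_Ici.mpr (by positivity)) hult.le)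
    calc μ {x | s ≤ N (C₃ * |f x|)} ≤ tailFun μ f (a / C₃) := h1
      _ ≤ Vfun μ N (a / C₃ / C₂) := h2
      _ ≤ Vfun μ N (a / C) := h3
      _ = ν (Set.Ioi (a / C)) := h4
      _ ≤ _ := h5
  have key : ∫⁻ x, ENNReal.ofReal (N (C₃ * |f x|)) ∂μ < ⊤ := by
    rw [layer1]
    calc ∫⁻ s in Set.Ioi (0:ℝ), μ {x | s ≤ N (C₃ * |f x|)}
        ≤ ∫⁻ s in Set.Ioi (0:ℝ), (ν.restrict (Set.Ioi 0)) {t | s ≤ N (C * t)} := by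
          refine lintegral_mono_ae ?_
          filter_upwards [ae_restrict_mem measurableSet_Ioi] with s hs using pointwise s hs
      _ = ∫⁻ t, ENNReal.ofReal (N (C * t)) ∂(ν.restrict (Set.Ioi 0)) := layer2.symm
      _ = ∫⁻ t in Set.Ioi (0:ℝ), ENNReal.ofReal (N (C * t)) ∂ν := rfl
      _ < ⊤ := hJ
  refine ⟨key, ?_⟩
  set I := ∫⁻ x, ENNReal.ofReal (N (C₃ * |f x|)) ∂μ with hI
  set m : ℝ := max 1 I.toReal with hm
  have hm1 : (1:ℝ) ≤ m := le_max_left _ _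
  have hmpos : (0:ℝ) < m := lt_of_lt_of_le one_pos hm1
  set k : ℝ := m / C₃ with hk
  have hkpos : 0 < k := div_pos hmpos hC₃
  have hscale : ∀ x, N (|f x| / k) ≤ (1/m) * N (C₃ * |f x|) := by
    intro x
    have heq : |f x| / k = (1/m) * (C₃ * |f x|) := by
      rw [hk]
      field_simp
    rw [heq]
    have hb : (0:ℝ) ≤ 1 - 1/m := by
      rw [sub_nonneg]
      exact div_le_one_of_le₀ hm1 hmpos.le
    have hc := hN.convexOn.2 (Set.mem_univ (C₃ * |f x|)) (Set.mem_univ (0:ℝ))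
      (by positivity : (0:ℝ) ≤ 1/m) hb (by ring)
    simpa [hN0, smul_eq_mul] using hc
  have hint : ∫⁻ x, ENNReal.ofReal (N (|f x| / k)) ∂μ ≤ 1 := by
    calc ∫⁻ x, ENNReal.ofReal (N (|f x| / k)) ∂μ
        ≤ ∫⁻ x, ENNReal.ofReal ((1/m) * N (C₃ * |f x|)) ∂μ :=
          lintegral_mono fun x => ENNReal.ofReal_le_ofReal (hscale x)
      _ = ENNReal.ofReal (1/m) * I := by
          simp_rw [ENNReal.ofReal_mul (by positivity : (0:ℝ) ≤ 1/m)]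
          rw [lintegral_const_mul' _ _ ENNReal.ofReal_ne_top]
      _ ≤ ENNReal.ofReal (1/m) * ENNReal.ofReal m := by
          gcongr
          calc I = ENNReal.ofReal I.toReal := (ENNReal.ofReal_toReal key.ne).symm
            _ ≤ ENNReal.ofReal m := ENNReal.ofReal_le_ofReal (le_max_right _ _)
      _ = ENNReal.ofReal ((1/m) * m) := (ENNReal.ofReal_mul (by positivity)).symm
      _ = 1 := by rw [one_div, inv_mul_cancel₀ hmpos.ne', ENNReal.ofReal_one]
  have hmem : ENNReal.ofReal k ∈ ENNReal.ofReal ''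
      {k : ℝ | 0 < k ∧ ∫⁻ x, ENNReal.ofReal (N (|f x| / k)) ∂μ ≤ 1} :=
    ⟨k, ⟨hkpos, hint⟩, rfl⟩
  exact lt_of_le_of_lt (sInf_le hmem) ENNReal.ofReal_lt_top
end

section
/- Let (X, μ) be an atomless σ-finite non-zero measure space and N a Young–Orlicz function. If Y(N) := sup{ ‖f‖_{sL(N)} / ‖f‖_{wL(N)} : f ∈ wL(N), f ≠ 0 } is finite, then there exists C₀ ∈ (0, ∞) such that the Lebesgue–Stieltjes integral ∫₀^∞ N(C₀ t) |dV[N](t)| is finite. -/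
open MeasureTheory ENNReal Set Filter Topology

section Aux
variable {X : Type*} [MeasurableSpace X] {μ : Measure X}

/-- halving step -/
lemma atomless_half (h : Atomless μ) {c : Set X} (hc : MeasurableSet c)
    (h0 : 0 < μ c) (hfin : μ c ≠ ⊤) :
    ∃ d : Set X, MeasurableSet d ∧ d ⊆ c ∧ 0 < μ d ∧ μ d ≤ μ c / 2 := by
  obtain ⟨t, ht, hts, ht0, htlt⟩ := h c hc h0
  rcases le_or_gt (μ t) (μ c / 2) with hle | hgt
  · exact ⟨t, ht, hts, ht0, hle⟩
  · refine ⟨c \ t, hc.diff ht, diff_subset, ?_, ?_⟩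
    · have : μ (c \ t) = μ c - μ t := measure_diff hts ht.nullMeasurableSet (htlt.trans_le le_top).ne
      rw [this]
      exact tsub_pos_of_lt htlt
    · have hmeas : μ (c \ t) = μ c - μ t := measure_diff hts ht.nullMeasurableSet (htlt.trans_le le_top).ne
      rw [hmeas]
      have h2 : μ c ≤ μ t + μ c / 2 := by
        calc μ c = μ c / 2 + μ c / 2 := (ENNReal.add_halves _).symm
        _ ≤ μ t + μ c / 2 := by gcongr
      exact tsub_le_iff_left.mpr h2

lemma atomless_small (h : Atomless μ) {s : Set X} (hs : MeasurableSet s)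
    (h0 : 0 < μ s) {ε : ℝ≥0∞} (hε : 0 < ε) :
    ∃ t : Set X, MeasurableSet t ∧ t ⊆ s ∧ 0 < μ t ∧ μ t < ε := by
  -- first find a finite-measure positive subset
  obtain ⟨t₀, ht₀, ht₀s, ht₀0, ht₀fin⟩ :
      ∃ t₀ : Set X, MeasurableSet t₀ ∧ t₀ ⊆ s ∧ 0 < μ t₀ ∧ μ t₀ ≠ ⊤ := by
    rcases eq_or_ne (μ s) ⊤ with hstop | hsfin
    · obtain ⟨t, ht, hts, ht0, htlt⟩ := h s hs h0
      exact ⟨t, ht, hts, ht0, by rw [hstop] at htlt; exact htlt.ne⟩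
    · exact ⟨s, hs, subset_rfl, h0, hsfin⟩
  -- iterate halving
  have key : ∀ n : ℕ, ∃ t : Set X, MeasurableSet t ∧ t ⊆ s ∧ 0 < μ t ∧ μ t ≤ μ t₀ / 2 ^ n := by
    intro n
    induction n with
    | zero => exact ⟨t₀, ht₀, ht₀s, ht₀0, by simp⟩
    | succ n ih =>
      obtain ⟨t, ht, hts, ht0, htle⟩ := ih
      have htfin : μ t ≠ ⊤ := by
        refine ne_top_of_le_ne_top ?_ htle
        exact (ENNReal.div_lt_top ht₀fin (by positivity)).ne
      obtain ⟨d, hd, hdt, hd0, hdle⟩ := atomless_half h ht ht0 htfin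
      refine ⟨d, hd, hdt.trans hts, hd0, ?_⟩
      calc μ d ≤ μ t / 2 := hdle
      _ ≤ μ t₀ / 2 ^ n / 2 := by gcongr
      _ = μ t₀ / 2 ^ (n + 1) := by
        rw [div_eq_mul_inv, div_eq_mul_inv, div_eq_mul_inv, mul_assoc,
          ← ENNReal.mul_inv (Or.inr ENNReal.ofNat_ne_top) (Or.inr two_ne_zero), pow_succ]
  -- choose n with μ t₀ / 2 ^ n < ε
  obtain ⟨n, hn⟩ : ∃ n : ℕ, μ t₀ / 2 ^ n < ε := by
    rcases eq_or_ne ε ⊤ with rfl | hεtop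
    · refine ⟨0, ?_⟩
      rw [pow_zero, div_one]
      exact ht₀fin.lt_top
    · have hd0 : ε / μ t₀ ≠ 0 := ENNReal.div_ne_zero.mpr ⟨hε.ne', ht₀fin⟩
      obtain ⟨n, hn⟩ := ENNReal.exists_inv_two_pow_lt hd0
      refine ⟨n, ?_⟩
      have := ENNReal.mul_lt_of_lt_div' hn
      rwa [div_eq_mul_inv, ENNReal.inv_pow]
  obtain ⟨t, ht, hts, ht0, htle⟩ := key n
  exact ⟨t, ht, hts, ht0, htle.trans_lt hn⟩

lemma atomless_exists_measure_eq (h : Atomless μ) {s : Set X} (hs : MeasurableSet s)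
    {b : ℝ≥0∞} (hbs : b ≤ μ s) (hb : b ≠ ⊤) :
    ∃ t : Set X, MeasurableSet t ∧ t ⊆ s ∧ μ t = b := by
  rcases eq_or_ne b 0 with rfl | hb0
  · exact ⟨∅, MeasurableSet.empty, empty_subset _, measure_empty⟩
  -- the state type
  set St := {t : Set X // MeasurableSet t ∧ t ⊆ s ∧ μ t ≤ b} with hSt
  have hstep : ∀ p : St, ∃ q : St, p.val ⊆ q.val ∧
      ∀ w : Set X, MeasurableSet w → w ⊆ s \ p.val → μ w ≤ b - μ p.val →
        μ p.val + min (μ w) 1 / 2 ≤ μ q.val := by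
    rintro ⟨t, ht, hts, htb⟩
    set P : Set X → Prop := fun v => MeasurableSet v ∧ v ⊆ s \ t ∧ μ v ≤ b - μ t with hP
    set δ : ℝ≥0∞ := ⨆ v, ⨆ (_ : P v), μ v with hδ
    have hex : ∃ v, P v ∧ min δ 1 / 2 ≤ μ v := by
      rcases eq_or_ne δ 0 with hδ0 | hδ0
      · exact ⟨∅, ⟨MeasurableSet.empty, empty_subset _, by simp⟩, by simp [hδ0]⟩
      · have hlt : min δ 1 / 2 < δ := by
          have h1 : min δ 1 ≠ 0 := (lt_min (pos_iff_ne_zero.mpr hδ0) zero_lt_one).ne'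
          have h2 : min δ 1 ≠ ⊤ := by simp
          exact lt_of_lt_of_le (ENNReal.half_lt_self h1 h2) (min_le_left _ _)
        rw [hδ] at hlt
        obtain ⟨v, hv⟩ := lt_iSup_iff.mp hlt
        obtain ⟨hPv, hvlt⟩ := lt_iSup_iff.mp hv
        exact ⟨v, hPv, hvlt.le⟩
    obtain ⟨v, hPv, hvge⟩ := hex
    have hdisj : Disjoint t v := disjoint_sdiff_right.mono_right hPv.2.1
    have hμtv : μ (t ∪ v) = μ t + μ v := measure_union hdisj hPv.1
    refine ⟨⟨t ∪ v, ht.union hPv.1, union_subset hts (hPv.2.1.trans diff_subset), ?_⟩,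
      subset_union_left, ?_⟩
    · rw [hμtv]
      calc μ t + μ v ≤ μ t + (b - μ t) := by gcongr; exact hPv.2.2
      _ = b := add_tsub_cancel_of_le htb
    · intro w hw hws hwb
      have hwδ : μ w ≤ δ := by
        rw [hδ]
        exact le_iSup₂ (f := fun v (_ : P v) => μ v) w ⟨hw, hws, hwb⟩
      calc μ t + min (μ w) 1 / 2 ≤ μ t + min δ 1 / 2 := by gcongr
      _ ≤ μ t + μ v := by gcongr
      _ = μ (t ∪ v) := hμtv.symm
  -- the iteration
  let T : ℕ → St := fun k => Nat.rec ⟨∅, MeasurableSet.empty, empty_subset _, by simp⟩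
    (fun _ p => (hstep p).choose) k
  have hTsucc : ∀ k, T (k + 1) = (hstep (T k)).choose := fun _ => rfl
  have hmono : Monotone fun k => (T k).val := by
    apply monotone_nat_of_le_succ
    intro k
    rw [hTsucc k]
    exact (hstep (T k)).choose_spec.1
  set tI : Set X := ⋃ k, (T k).val with htI
  have htImeas : MeasurableSet tI := MeasurableSet.iUnion fun k => (T k).2.1
  have htIs : tI ⊆ s := iUnion_subset fun k => (T k).2.2.1
  set L : ℝ≥0∞ := ⨆ k, μ (T k).val with hL
  have hμtI : μ tI = L := Directed.measure_iUnion (hmono.directed_le)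
  have hLb : L ≤ b := iSup_le fun k => (T k).2.2.2
  rcases eq_or_lt_of_le hLb with hLeq | hLlt
  · exact ⟨tI, htImeas, htIs, by rw [hμtI, hLeq]⟩
  · exfalso
    have hpos : 0 < μ (s \ tI) := by
      have h1 : b - L ≤ μ s - μ tI := by
        rw [hμtI]
        exact tsub_le_tsub_right hbs _
      have h2 : μ s - μ tI ≤ μ (s \ tI) := le_measure_diff
      exact lt_of_lt_of_le (tsub_pos_of_lt hLlt) (h1.trans h2)
    obtain ⟨w, hw, hws, hw0, hwlt⟩ :=
      atomless_small h (hs.diff htImeas) hpos (tsub_pos_of_lt hLlt)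
    set η : ℝ≥0∞ := min (μ w) 1 / 2 with hη
    have hη0 : η ≠ 0 := by
      rw [hη]
      simp only [ne_eq, ENNReal.div_eq_zero_iff]
      push_neg
      exact ⟨(lt_min hw0 zero_lt_one).ne', ENNReal.ofNat_ne_top⟩
    have hkey : ∀ k, μ (T k).val + η ≤ μ (T (k + 1)).val := by
      intro k
      rw [hTsucc k]
      refine (hstep (T k)).choose_spec.2 w hw ?_ ?_
      · exact hws.trans (diff_subset_diff_right (le_iSup (fun k => (T k).val) k))
      · refine hwlt.le.trans (tsub_le_tsub_left ?_ _)
        exact le_iSup (fun k => μ (T k).val) k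
    have hind : ∀ k : ℕ, (k : ℝ≥0∞) * η ≤ μ (T k).val := by
      intro k
      induction k with
      | zero => simp
      | succ k ih =>
        push_cast
        calc ((k : ℝ≥0∞) + 1) * η = (k : ℝ≥0∞) * η + η := by ring
        _ ≤ μ (T k).val + η := by gcongr
        _ ≤ μ (T (k + 1)).val := hkey k
    obtain ⟨n, hn⟩ := ENNReal.exists_nat_mul_gt hη0 hb
    exact absurd ((hind n).trans (T n).2.2.2) (by exact not_le.mpr hn)

lemma atomless_exists_disjoint_family (h : Atomless μ) (b : ℕ → ℝ≥0∞) (hbfin : ∀ j, b j ≠ ⊤)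
    (hsum : ∀ t : Finset ℕ, ∑ i ∈ t, b i ≤ μ univ) :
    ∃ F : ℕ → Set X, (∀ j, MeasurableSet (F j)) ∧ Pairwise (Function.onFun Disjoint F) ∧
      ∀ j, μ (F j) = b j := by
  set St : ℕ → Type _ := fun j =>
    {U : Set X // MeasurableSet U ∧ μ U = ∑ i ∈ Finset.range j, b i} with hSt
  have hSfin : ∀ j, (∑ i ∈ Finset.range j, b i) ≠ ⊤ := by
    intro j
    rw [← lt_top_iff_ne_top]
    exact ENNReal.sum_lt_top.mpr fun i _ => (hbfin i).lt_top
  have hstep : ∀ j, ∀ p : St j, ∃ q : St (j + 1), p.val ⊆ q.val := by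
    rintro j ⟨U, hU, hμU⟩
    have havail : b j ≤ μ (univ \ U) := by
      have h1 : ∑ i ∈ Finset.range j, b i + b j ≤ μ univ := by
        rw [← Finset.sum_range_succ]
        exact hsum _
      have h2 : b j ≤ μ univ - μ U := by
        rw [hμU]
        exact ENNReal.le_sub_of_add_le_left (hSfin j) h1
      exact h2.trans le_measure_diff
    obtain ⟨A, hA, hAsub, hμA⟩ :=
      atomless_exists_measure_eq h (MeasurableSet.univ.diff hU) havail (hbfin j)
    have hdisj : Disjoint U A := disjoint_sdiff_right.mono_right hAsub
    refine ⟨⟨U ∪ A, hU.union hA, ?_⟩, subset_union_left⟩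
    rw [measure_union hdisj hA, hμU, hμA, Finset.sum_range_succ]
  set U : ∀ j, St j := fun j =>
    Nat.rec (motive := St) ⟨∅, MeasurableSet.empty, by simp⟩ (fun j p => (hstep j p).choose) j
    with hU
  have hUsucc : ∀ j, U (j + 1) = (hstep j (U j)).choose := fun _ => rfl
  have hmono : Monotone fun j => (U j).val := by
    apply monotone_nat_of_le_succ
    intro j
    rw [hUsucc j]
    exact (hstep j (U j)).choose_spec
  refine ⟨fun j => (U (j + 1)).val \ (U j).val, fun j => (U (j + 1)).2.1.diff (U j).2.1,
    ?_, ?_⟩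
  · have key : ∀ i j, i < j →
        Disjoint ((U (i + 1)).val \ (U i).val) ((U (j + 1)).val \ (U j).val) := by
      intro i j hij
      have h1 : (U (i + 1)).val \ (U i).val ⊆ (U j).val := diff_subset.trans (hmono hij)
      exact (disjoint_sdiff_right.mono_left h1)
    intro i j hij
    rcases lt_or_gt_of_ne hij with hlt | hgt
    · exact key i j hlt
    · exact (key j i hgt).symm
  · intro j
    rw [measure_diff (hmono (Nat.le_succ j)) (U j).2.1.nullMeasurableSet
      (by rw [(U j).2.2]; exact hSfin j), (U (j + 1)).2.2, (U j).2.2,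
      Finset.sum_range_succ, ENNReal.add_sub_cancel_left (hSfin j)]

lemma IsYoungOrlicz.zero_eq {N : ℝ → ℝ} (hN : IsYoungOrlicz N) : N 0 = 0 := by
  have h1 : Tendsto N (nhdsWithin 0 (Set.Ioi 0)) (nhds (N 0)) :=
    (hN.continuous.tendsto 0).mono_left nhdsWithin_le_nhds
  have h2 : Tendsto N (nhdsWithin 0 (Set.Ioi 0)) (nhds 0) := by
    have h3 : Tendsto (fun u => (N u / u) * u) (nhdsWithin 0 (Set.Ioi 0)) (nhds 0) := by
      have := hN.tendsto_div_zero.mul (tendsto_id.mono_left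
        (nhdsWithin_le_nhds : nhdsWithin (0:ℝ) (Set.Ioi 0) ≤ nhds 0))
      simpa using this
    refine h3.congr' ?_
    filter_upwards [self_mem_nhdsWithin] with u hu
    exact div_mul_cancel₀ (N u) (ne_of_gt hu)
  exact tendsto_nhds_unique h1 h2

lemma IsYoungOrlicz.pos {N : ℝ → ℝ} (hN : IsYoungOrlicz N) {t : ℝ} (ht : 0 < t) : 0 < N t := by
  have := hN.strictMonoOn (Set.self_mem_Ici) (Set.mem_Ici.mpr ht.le) ht
  rwa [hN.zero_eq] at this

end Aux

theorem coincidence_implies_integral_finite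
    {X : Type*} [MeasurableSpace X] (μ : MeasureTheory.Measure X) [SigmaFinite μ]
    (hμ0 : μ ≠ 0) (hatomless : Atomless μ)
    (N : ℝ → ℝ) (hN : IsYoungOrlicz N)
    (ν : MeasureTheory.Measure ℝ)
    (hν : ∀ t : ℝ, 0 < t → ν (Set.Ioi t) = Vfun μ N t)
    (hY : Ynorm μ N < ⊤) :
    ∃ C₀ : ℝ, 0 < C₀ ∧ ∫⁻ t in Set.Ioi (0:ℝ), ENNReal.ofReal (N (C₀ * t)) ∂ν < ⊤ := by
  classical
  have hμX : 0 < μ Set.univ := MeasureTheory.Measure.measure_univ_pos.mpr hμ0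
  have hNmono : MonotoneOn N (Set.Ici 0) := hN.strictMonoOn.monotoneOn
  have h2pow : ∀ n : ℤ, (0:ℝ) < 2 ^ n := fun n => zpow_pos two_pos n
  have h2mono : ∀ {n m : ℤ}, n ≤ m → (2:ℝ) ^ n ≤ 2 ^ m :=
    fun h => zpow_le_zpow_right₀ one_le_two h
  -- V basics
  have hVanti : ∀ s t : ℝ, 0 < s → s ≤ t → Vfun μ N t ≤ Vfun μ N s := by
    intro s t hs hst
    unfold Vfun
    refine min_le_min le_rfl (ENNReal.inv_le_inv.mpr (ENNReal.ofReal_le_ofReal ?_))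
    exact hNmono (Set.mem_Ici.mpr hs.le) (Set.mem_Ici.mpr (hs.le.trans hst)) hst
  have hVne : ∀ t : ℝ, 0 < t → Vfun μ N t ≠ ⊤ := by
    intro t ht
    refine ne_top_of_le_ne_top (ENNReal.inv_ne_top.mpr ?_) (min_le_right _ _)
    exact (ENNReal.ofReal_pos.mpr (hN.pos ht)).ne'
  have hVle : ∀ t : ℝ, Vfun μ N t ≤ μ Set.univ := fun t => min_le_left _ _
  set v : ℤ → ℝ≥0∞ := fun n => Vfun μ N ((2:ℝ) ^ n) with hv
  set a : ℤ → ℝ≥0∞ := fun n => v n - v (n + 1) with ha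
  have hvanti : ∀ {n m : ℤ}, n ≤ m → v m ≤ v n := fun hnm =>
    hVanti _ _ (h2pow _) (h2mono hnm)
  have hvne : ∀ n, v n ≠ ⊤ := fun n => hVne _ (h2pow n)
  have hane : ∀ n, a n ≠ ⊤ := fun n => ne_top_of_le_ne_top (hvne n) tsub_le_self
  -- v tends to 0 along ℕ-shifted sequences
  have hv0 : ∀ n : ℤ, Tendsto (fun M : ℕ => v (n + M)) atTop (nhds 0) := by
    intro n
    have hb : Tendsto (fun M : ℕ => (2:ℝ) ^ (n + (M:ℤ))) atTop atTop := by
      have heq : ∀ M : ℕ, (2:ℝ) ^ n * 2 ^ (M:ℕ) = (2:ℝ) ^ (n + (M:ℤ)) := by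
        intro M
        rw [zpow_add₀ (two_ne_zero) n (M:ℤ), zpow_natCast]
      exact Tendsto.congr heq
        ((tendsto_pow_atTop_atTop_of_one_lt (one_lt_two : (1:ℝ) < 2)).const_mul_atTop (h2pow n))
    have hof : Tendsto (fun M : ℕ => ENNReal.ofReal (N ((2:ℝ) ^ (n + (M:ℤ))))) atTop (nhds ⊤) :=
      ENNReal.tendsto_ofReal_atTop.comp (hN.tendsto_atTop.comp hb)
    have hinv : Tendsto (fun M : ℕ => (ENNReal.ofReal (N ((2:ℝ) ^ (n + (M:ℤ)))))⁻¹) atTop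
        (nhds 0) := by
      have := ENNReal.tendsto_inv_iff.mpr hof
      simpa using this
    refine tendsto_of_tendsto_of_tendsto_of_le_of_le tendsto_const_nhds hinv
      (fun M => zero_le) (fun M => min_le_right _ _)
  -- telescoping partial sums
  have hpart : ∀ (n : ℤ) (M : ℕ), ∑ m ∈ Finset.range M, a (n + m) = v n - v (n + M) := by
    intro n M
    induction M with
    | zero => simp
    | succ M ih =>
      rw [Finset.sum_range_succ, ih]
      have h1 : v (n + (M + 1 : ℕ)) ≤ v (n + M) := hvanti (by push_cast; omega)
      have h2 : v (n + M) ≤ v n := hvanti (by push_cast; omega)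
      have := tsub_add_tsub_cancel h2 h1
      push_cast
      push_cast at this
      convert this using 3 <;> ring
  have htsum : ∀ n : ℤ, ∑' m : ℕ, a (n + m) = v n := by
    intro n
    have hmono : Monotone fun M : ℕ => ∑ m ∈ Finset.range M, a (n + m) := by
      apply monotone_nat_of_le_succ
      intro M
      rw [Finset.sum_range_succ]
      exact le_self_add
    have h1 : Tendsto (fun M : ℕ => ∑ m ∈ Finset.range M, a (n + m)) atTop
        (nhds (⨆ M : ℕ, ∑ m ∈ Finset.range M, a (n + m))) := tendsto_atTop_iSup hmono
    have h2 : Tendsto (fun M : ℕ => ∑ m ∈ Finset.range M, a (n + m)) atTop (nhds (v n)) := by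
      have h3 : Tendsto (fun M : ℕ => v n - v (n + M)) atTop (nhds (v n - 0)) :=
        ENNReal.Tendsto.sub tendsto_const_nhds (hv0 n) (Or.inl (hvne n))
      rw [tsub_zero] at h3
      exact h3.congr fun M => (hpart n M).symm
    rw [ENNReal.tsum_eq_iSup_nat]
    exact tendsto_nhds_unique h1 h2
  -- finite sums of a over sets bounded below
  have hIccBound : ∀ (m : ℤ) (T : Finset ℤ), (∀ i ∈ T, m ≤ i) → ∑ i ∈ T, a i ≤ v m := by
    intro m T hT
    have hinj : Set.InjOn (fun i : ℤ => (i - m).toNat) T := by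
      intro i hi j hj hij
      have h1 := hT i (Finset.mem_coe.mp hi)
      have h2 := hT j (Finset.mem_coe.mp hj)
      simp only at hij
      omega
    calc ∑ i ∈ T, a i = ∑ j ∈ T.image (fun i => (i - m).toNat), a (m + j) := by
          rw [Finset.sum_image (fun i hi j hj h => hinj hi hj h)]
          refine Finset.sum_congr rfl fun i hi => ?_
          congr 1
          have := hT i hi
          omega
    _ ≤ ∑' j : ℕ, a (m + j) := ENNReal.sum_le_tsum _
    _ = v m := htsum m
  have hfinsum : ∀ T : Finset ℤ, ∑ i ∈ T, a i ≤ μ Set.univ := by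
    intro T
    rcases T.eq_empty_or_nonempty with rfl | hT
    · simp
    · exact (hIccBound (T.min' hT) T fun i hi => T.min'_le i hi).trans
        ((hvanti (le_refl _)).trans (hVle _))
  -- construct the disjoint family
  set e : ℕ ≃ ℤ := (Denumerable.eqv ℤ).symm with he
  have hbsum : ∀ T : Finset ℕ, ∑ j ∈ T, a (e j) ≤ μ Set.univ := by
    intro T
    calc ∑ j ∈ T, a (e j)
        = ∑ i ∈ T.image (fun j => e j), a i :=
          (Finset.sum_image fun i _ j _ h => e.injective h).symm
    _ ≤ μ Set.univ := hfinsum _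
  obtain ⟨F, hFmeas, hFdisj, hFμ⟩ :=
    atomless_exists_disjoint_family hatomless (fun j => a (e j)) (fun j => hane _) hbsum
  -- the function f
  set f : X → ℝ := fun x =>
    (∑' j : ℕ, (F j).indicator (fun _ => ENNReal.ofReal ((2:ℝ) ^ (e j))) x).toReal with hf
  have hfmeas : Measurable f :=
    (Measurable.ennreal_tsum fun j => measurable_const.indicator (hFmeas j)).ennreal_toReal
  have hfj : ∀ j x, x ∈ F j → f x = (2:ℝ) ^ (e j) := by
    intro j x hx
    have h1 : ∑' i : ℕ, (F i).indicator (fun _ => ENNReal.ofReal ((2:ℝ) ^ (e i))) x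
        = ENNReal.ofReal ((2:ℝ) ^ (e j)) := by
      rw [tsum_eq_single j]
      · exact Set.indicator_of_mem hx _
      · intro i hij
        exact Set.indicator_of_notMem (Set.disjoint_left.mp (hFdisj hij) · hx) _
    rw [hf]
    simp only [h1]
    exact ENNReal.toReal_ofReal (h2pow (e j)).le
  have hfnotmem : ∀ x, x ∉ (⋃ j, F j) → f x = 0 := by
    intro x hx
    have h1 : ∀ i : ℕ, (F i).indicator (fun _ => ENNReal.ofReal ((2:ℝ) ^ (e i))) x = 0 :=
      fun i => Set.indicator_of_notMem (fun hmem => hx (Set.mem_iUnion.mpr ⟨i, hmem⟩)) _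
    rw [hf]
    simp only [h1, tsum_zero, ENNReal.toReal_zero]
  have hfnn : ∀ x, 0 ≤ f x := fun x => ENNReal.toReal_nonneg
  -- tail bound
  have htail : ∀ t : ℝ, 0 < t → tailFun μ f t ≤ Vfun μ N t := by
    intro t ht
    obtain ⟨n, hn⟩ := exists_mem_Ioc_zpow ht (one_lt_two : (1:ℝ) < 2)
    have hsub : {x | t ≤ |f x|} ⊆ ⋃ j : {j : ℕ // n + 1 ≤ e j}, F j := by
      intro x hx
      simp only [Set.mem_setOf_eq, abs_of_nonneg (hfnn x)] at hx
      have hxu : x ∈ ⋃ j, F j := by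
        by_contra hxu
        rw [hfnotmem x hxu] at hx
        exact absurd (ht.trans_le hx) (lt_irrefl 0)
      obtain ⟨j, hj⟩ := Set.mem_iUnion.mp hxu
      have hfx : f x = (2:ℝ) ^ (e j) := hfj j x hj
      have hejn : n + 1 ≤ e j := by
        by_contra hej
        push_neg at hej
        have : (2:ℝ) ^ (e j) ≤ 2 ^ n := h2mono (by omega)
        rw [hfx] at hx
        exact absurd (hx.trans_lt (this.trans_lt hn.1)) (lt_irrefl t)
      exact Set.mem_iUnion.mpr ⟨⟨j, hejn⟩, hj⟩
    calc tailFun μ f t ≤ μ (⋃ j : {j : ℕ // n + 1 ≤ e j}, F j) := measure_mono hsub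
    _ ≤ ∑' j : {j : ℕ // n + 1 ≤ e j}, μ (F j) := measure_iUnion_le _
    _ ≤ v (n + 1) := by
        rw [ENNReal.tsum_eq_iSup_sum]
        refine iSup_le fun T => ?_
        have : ∑ j ∈ T, μ (F j.val) = ∑ i ∈ T.image (fun j => e j.val), a i := by
          rw [Finset.sum_image (fun i _ j _ h => Subtype.ext (e.injective h))]
          exact Finset.sum_congr rfl fun j _ => hFμ j.val
        rw [this]
        refine hIccBound _ _ fun i hi => ?_
        obtain ⟨j, _, rfl⟩ := Finset.mem_image.mp hi
        exact j.property
    _ ≤ Vfun μ N t := hVanti _ _ ht hn.2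
  -- weak norm bound
  have hweak : weakNorm μ N f ≤ 1 := by
    have h1 : (1:ℝ) ∈ {K : ℝ | 0 < K ∧ ∀ t > 0, tailFun μ f t ≤ Vfun μ N (t / K)} := by
      refine ⟨one_pos, fun t ht => ?_⟩
      rw [div_one]
      exact htail t ht
    calc weakNorm μ N f ≤ ENNReal.ofReal 1 := csInf_le (OrderBot.bddBelow _) ⟨1, h1, rfl⟩
    _ = 1 := ENNReal.ofReal_one
  have hwne : weakNorm μ N f ≠ ⊤ := ne_top_of_le_ne_top one_ne_top hweak
  -- f is not a.e. zero
  have hsomea : ∃ n : ℤ, 0 < a n := by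
    by_contra hno
    push_neg at hno
    have hz : ∀ n : ℤ, a n = 0 := fun n => le_antisymm (hno n) zero_le
    have h1 : v 0 = 0 := by
      rw [← htsum 0]
      simp [hz]
    have h2 : 0 < v 0 := by
      refine lt_min hμX (ENNReal.inv_pos.mpr ENNReal.ofReal_ne_top)
    rw [h1] at h2
    exact absurd h2 (lt_irrefl 0)
  have hae : ¬ f =ᵐ[μ] (0 : X → ℝ) := by
    obtain ⟨n, hn⟩ := hsomea
    intro hcon
    have h1 : μ {x | f x ≠ 0} = 0 := by
      have := hcon
      rw [Filter.EventuallyEq, ae_iff] at this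
      simpa using this
    have h2 : F (e.symm n) ⊆ {x | f x ≠ 0} := by
      intro x hx
      have := hfj (e.symm n) x hx
      simp only [Equiv.apply_symm_apply] at this
      simp only [Set.mem_setOf_eq, this]
      exact (h2pow n).ne'
    have h3 : μ (F (e.symm n)) = a n := by
      rw [hFμ]
      simp
    exact absurd (le_antisymm ((measure_mono h2).trans h1.le) zero_le)
      (by rw [h3]; exact hn.ne')
  -- strong norm is finite
  have hratio : strongNorm μ N f / weakNorm μ N f ≤ Ynorm μ N := by
    refine le_iSup_of_le f ?_
    refine le_iSup_of_le hfmeas ?_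
    refine le_iSup_of_le hae ?_
    exact le_iSup_of_le hwne le_rfl
  have hsne : strongNorm μ N f ≠ ⊤ := by
    intro htop
    rw [htop, ENNReal.top_div_of_ne_top hwne] at hratio
    exact absurd (lt_of_le_of_lt hratio hY) (lt_irrefl _)
  obtain ⟨k, ⟨hk0, hkint⟩⟩ :
      ∃ k : ℝ, 0 < k ∧ ∫⁻ x, ENNReal.ofReal (N (|f x| / k)) ∂μ ≤ 1 := by
    by_contra hno
    push_neg at hno
    have hempty : {k : ℝ | 0 < k ∧ ∫⁻ x, ENNReal.ofReal (N (|f x| / k)) ∂μ ≤ 1} = ∅ := by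
      rw [Set.eq_empty_iff_forall_notMem]
      rintro k ⟨hk1, hk2⟩
      exact absurd hk2 (not_le.mpr (hno k hk1))
    rw [strongNorm, hempty] at hsne
    simp at hsne
  -- final computation
  refine ⟨1 / (2 * k), by positivity, ?_⟩
  have hcover : Set.Ioi (0:ℝ) = ⋃ n : ℤ, Set.Ioc ((2:ℝ) ^ n) ((2:ℝ) ^ (n + 1)) := by
    ext t
    simp only [Set.mem_Ioi, Set.mem_iUnion]
    constructor
    · intro ht
      exact exists_mem_Ioc_zpow ht (one_lt_two : (1:ℝ) < 2)
    · rintro ⟨n, hn⟩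
      exact (h2pow n).trans hn.1
  have hdisjI : Pairwise (Function.onFun Disjoint
      fun n : ℤ => Set.Ioc ((2:ℝ) ^ n) ((2:ℝ) ^ (n + 1))) := by
    have key : ∀ {n m : ℤ}, n < m →
        Disjoint (Set.Ioc ((2:ℝ) ^ n) ((2:ℝ) ^ (n + 1)))
          (Set.Ioc ((2:ℝ) ^ m) ((2:ℝ) ^ (m + 1))) := by
      intro n m h
      refine Set.disjoint_left.mpr fun x hx1 hx2 => ?_
      have h1 : (2:ℝ) ^ (n + 1) ≤ 2 ^ m := h2mono (by omega)
      have h2 := hx1.2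
      have h3 := hx2.1
      linarith
    intro n m hnm
    rcases lt_or_gt_of_ne hnm with h | h
    · exact key h
    · exact (key h).symm
  have hmeasI : ∀ n : ℤ, MeasurableSet (Set.Ioc ((2:ℝ) ^ n) ((2:ℝ) ^ (n + 1))) :=
    fun n => measurableSet_Ioc
  have hνIoc : ∀ n : ℤ, ν (Set.Ioc ((2:ℝ) ^ n) ((2:ℝ) ^ (n + 1))) = a n := by
    intro n
    have hu : Set.Ioc ((2:ℝ) ^ n) ((2:ℝ) ^ (n + 1)) ∪ Set.Ioi ((2:ℝ) ^ (n + 1))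
        = Set.Ioi ((2:ℝ) ^ n) := Set.Ioc_union_Ioi_eq_Ioi (h2mono (by omega))
    have hd : Disjoint (Set.Ioc ((2:ℝ) ^ n) ((2:ℝ) ^ (n + 1))) (Set.Ioi ((2:ℝ) ^ (n + 1))) :=
      Set.Ioc_disjoint_Ioi le_rfl
    have hadd : ν (Set.Ioc ((2:ℝ) ^ n) ((2:ℝ) ^ (n + 1))) + ν (Set.Ioi ((2:ℝ) ^ (n + 1)))
        = ν (Set.Ioi ((2:ℝ) ^ n)) := by
      rw [← measure_union hd measurableSet_Ioi, hu]
    rw [hν _ (h2pow n), hν _ (h2pow (n + 1))] at hadd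
    exact ENNReal.eq_sub_of_add_eq (hvne (n + 1)) hadd
  calc ∫⁻ t in Set.Ioi (0:ℝ), ENNReal.ofReal (N (1 / (2 * k) * t)) ∂ν
      = ∑' n : ℤ, ∫⁻ t in Set.Ioc ((2:ℝ) ^ n) ((2:ℝ) ^ (n + 1)),
        ENNReal.ofReal (N (1 / (2 * k) * t)) ∂ν := by
        rw [hcover, lintegral_iUnion hmeasI hdisjI]
  _ ≤ ∑' n : ℤ, ENNReal.ofReal (N ((2:ℝ) ^ n / k)) * a n := by
        refine ENNReal.tsum_le_tsum fun n => ?_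
        have hval : (1 : ℝ) / (2 * k) * (2:ℝ) ^ (n + 1) = 2 ^ n / k := by
          rw [zpow_add_one₀ (two_ne_zero : (2:ℝ) ≠ 0)]
          field_simp
        calc ∫⁻ t in Set.Ioc ((2:ℝ) ^ n) ((2:ℝ) ^ (n + 1)),
              ENNReal.ofReal (N (1 / (2 * k) * t)) ∂ν
            ≤ ∫⁻ _ in Set.Ioc ((2:ℝ) ^ n) ((2:ℝ) ^ (n + 1)),
              ENNReal.ofReal (N ((2:ℝ) ^ n / k)) ∂ν := by
              refine setLIntegral_mono measurable_const fun t htmem => ?_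
              refine ENNReal.ofReal_le_ofReal ?_
              rw [← hval]
              refine hNmono ?_ ?_ ?_
              · have := ((h2pow n).trans htmem.1).le
                have hpos : 0 < 1 / (2 * k) := by positivity
                exact Set.mem_Ici.mpr (by positivity)
              · have := (h2pow (n + 1)).le
                have hpos : 0 < 1 / (2 * k) := by positivity
                exact Set.mem_Ici.mpr (by positivity)
              · have hpos : 0 < 1 / (2 * k) := by positivity
                exact mul_le_mul_of_nonneg_left htmem.2 hpos.le
        _ = ENNReal.ofReal (N ((2:ℝ) ^ n / k)) * a n := by
              rw [setLIntegral_const, hνIoc n]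
  _ ≤ ∫⁻ x, ENNReal.ofReal (N (|f x| / k)) ∂μ := by
        have hstep : ∀ j : ℕ, ∫⁻ x in F j, ENNReal.ofReal (N (|f x| / k)) ∂μ
            = ENNReal.ofReal (N ((2:ℝ) ^ (e j) / k)) * a (e j) := by
          intro j
          rw [setLIntegral_congr_fun (hFmeas j)
            (fun x hx => by
              rw [hfj j x hx, abs_of_nonneg (h2pow (e j)).le]),
            setLIntegral_const, hFμ]
        calc ∑' n : ℤ, ENNReal.ofReal (N ((2:ℝ) ^ n / k)) * a n
            = ∑' j : ℕ, ENNReal.ofReal (N ((2:ℝ) ^ (e j) / k)) * a (e j) :=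
              (e.tsum_eq fun n => ENNReal.ofReal (N ((2:ℝ) ^ n / k)) * a n).symm
        _ = ∑' j : ℕ, ∫⁻ x in F j, ENNReal.ofReal (N (|f x| / k)) ∂μ := by
              exact tsum_congr fun j => (hstep j).symm
        _ = ∫⁻ x in ⋃ j, F j, ENNReal.ofReal (N (|f x| / k)) ∂μ :=
              (lintegral_iUnion hFmeas hFdisj _).symm
        _ ≤ ∫⁻ x, ENNReal.ofReal (N (|f x| / k)) ∂μ := setLIntegral_le_lintegral _ _
  _ ≤ 1 := hkint
  _ < ⊤ := one_lt_top
end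

section
/- Let (X, μ) be an atomless σ-finite non-zero measure space and N a Young–Orlicz function with J(N) < ∞, and let k₀[N] ∈ (1, ∞) be the unique solution of Q[N](k₀[N]) = 1. Then the constant k₀[N] is attained: any measurable function g : X → ℝ whose tail function satisfies T[g](t) = V[N](t) for all t > 0 has ‖g‖_{wL(N)} = 1 and ‖g‖_{sL(N)} = k₀[N]. Consequently Y(N) := sup{ ‖f‖_{sL(N)} / ‖f‖_{wL(N)} : f ∈ wL(N), f ≠ 0 } = k₀[N]. -/
open MeasureTheory ENNReal Set Filter Topology

section Helpers

variable {N : ℝ → ℝ}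

lemma IsYoungOrlicz.N_zero_s8 (hN : IsYoungOrlicz N) : N 0 = 0 := by
  have h1 : Tendsto N (nhdsWithin 0 (Ioi 0)) (nhds (N 0)) :=
    (hN.continuous.tendsto 0).mono_left nhdsWithin_le_nhds
  have h2 : Tendsto (fun u : ℝ => u) (nhdsWithin 0 (Ioi 0)) (nhds 0) :=
    tendsto_id.mono_left nhdsWithin_le_nhds
  have h3 : Tendsto (fun u : ℝ => N u / u * u) (nhdsWithin 0 (Ioi 0)) (nhds 0) := by
    simpa using hN.tendsto_div_zero.mul h2
  have h4 : Tendsto N (nhdsWithin 0 (Ioi 0)) (nhds 0) := by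
    refine h3.congr' ?_
    filter_upwards [self_mem_nhdsWithin] with u hu
    exact div_mul_cancel₀ _ (ne_of_gt hu)
  exact tendsto_nhds_unique h1 h4

lemma IsYoungOrlicz.N_pos_s8 (hN : IsYoungOrlicz N) {u : ℝ} (hu : 0 < u) : 0 < N u := by
  have := hN.strictMonoOn (Set.mem_Ici.mpr (le_refl (0:ℝ))) (le_of_lt hu) hu
  rwa [hN.N_zero_s8] at this

lemma IsYoungOrlicz.exists_eq (hN : IsYoungOrlicz N) {w : ℝ} (hw : 0 ≤ w) :
    ∃ u, 0 ≤ u ∧ N u = w := by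
  obtain ⟨b, hb1, hb2⟩ := ((hN.tendsto_atTop.eventually_ge_atTop w).and
    (eventually_ge_atTop 0)).exists
  have : w ∈ Icc (N 0) (N b) := ⟨by rwa [hN.N_zero_s8], hb1⟩
  obtain ⟨u, hu, huw⟩ := intermediate_value_Icc hb2 (hN.continuous.continuousOn) this
  exact ⟨u, hu.1, huw⟩

lemma Ninv_nonneg (N : ℝ → ℝ) (w : ℝ) : 0 ≤ Ninv N w :=
  Real.sInf_nonneg (fun _ hu => hu.1)

lemma IsYoungOrlicz.N_Ninv (hN : IsYoungOrlicz N) {w : ℝ} (hw : 0 ≤ w) :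
    N (Ninv N w) = w := by
  obtain ⟨u, hu0, huw⟩ := hN.exists_eq hw
  have hset : {v : ℝ | 0 ≤ v ∧ w ≤ N v} = Set.Ici u := by
    ext v
    simp only [Set.mem_setOf_eq, Set.mem_Ici]
    constructor
    · rintro ⟨hv0, hvw⟩
      by_contra h
      push_neg at h
      have := hN.strictMonoOn hv0 hu0 h
      rw [huw] at this
      linarith
    · intro huv
      refine ⟨hu0.trans huv, ?_⟩
      rw [← huw]
      exact hN.strictMonoOn.monotoneOn hu0 (hu0.trans huv) huv
  rw [Ninv, hset, csInf_Ici, huw]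

lemma IsYoungOrlicz.le_Ninv_iff (hN : IsYoungOrlicz N) {w b : ℝ} (hw : 0 ≤ w) (hb : 0 ≤ b) :
    b ≤ Ninv N w ↔ N b ≤ w := by
  constructor
  · intro h
    calc N b ≤ N (Ninv N w) := hN.strictMonoOn.monotoneOn hb (Ninv_nonneg N w) h
      _ = w := hN.N_Ninv hw
  · intro h
    by_contra hlt
    push_neg at hlt
    have := hN.strictMonoOn (Ninv_nonneg N w) hb hlt
    rw [hN.N_Ninv hw] at this
    linarith

lemma IsYoungOrlicz.Ninv_le_iff (hN : IsYoungOrlicz N) {w b : ℝ} (hw : 0 ≤ w) (hb : 0 ≤ b) :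
    Ninv N w ≤ b ↔ w ≤ N b := by
  constructor
  · intro h
    calc w = N (Ninv N w) := (hN.N_Ninv hw).symm
      _ ≤ N b := hN.strictMonoOn.monotoneOn (Ninv_nonneg N w) hb h
  · intro h
    by_contra hlt
    push_neg at hlt
    have := hN.strictMonoOn hb (Ninv_nonneg N w) hlt
    rw [hN.N_Ninv hw] at this
    linarith

lemma IsYoungOrlicz.Ninv_lt_iff (hN : IsYoungOrlicz N) {w b : ℝ} (hw : 0 ≤ w) (hb : 0 ≤ b) :
    Ninv N w < b ↔ w < N b := by
  rw [← not_le, ← not_le, hN.le_Ninv_iff hw hb]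

lemma IsYoungOrlicz.lt_Ninv_iff (hN : IsYoungOrlicz N) {w b : ℝ} (hw : 0 ≤ w) (hb : 0 ≤ b) :
    b < Ninv N w ↔ N b < w := by
  rw [← not_le, ← not_le, hN.Ninv_le_iff hw hb]

lemma IsYoungOrlicz.Ninv_pos (hN : IsYoungOrlicz N) {w : ℝ} (hw : 0 < w) : 0 < Ninv N w := by
  rw [hN.lt_Ninv_iff (le_of_lt hw) (le_refl 0), hN.N_zero_s8]
  exact hw

lemma IsYoungOrlicz.Ninv_mono (hN : IsYoungOrlicz N) : Monotone (Ninv N) := by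
  intro w1 w2 h
  apply csInf_le_csInf ⟨0, fun u hu => hu.1⟩
  · obtain ⟨u, hu0, huw⟩ := hN.exists_eq (le_max_right w2 0)
    exact ⟨u, hu0, huw ▸ le_max_left w2 0⟩
  · intro u hu
    exact ⟨hu.1, h.trans hu.2⟩

lemma IsYoungOrlicz.Ninv_measurable (hN : IsYoungOrlicz N) : Measurable (Ninv N) :=
  hN.Ninv_mono.measurable

end Helpers
section Helpers2

lemma lintegral_Ioi_inv_sq {m : ℝ} (hm : 0 < m) :
    ∫⁻ w in Set.Ioi m, ENNReal.ofReal ((w ^ 2)⁻¹) = (ENNReal.ofReal m)⁻¹ := by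
  have hint : IntegrableOn (fun w : ℝ => w ^ (-2 : ℝ)) (Set.Ioi m) :=
    integrableOn_Ioi_rpow_of_lt (by norm_num) hm
  have hval : ∫ w in Set.Ioi m, w ^ (-2 : ℝ) = m⁻¹ := by
    rw [integral_Ioi_rpow_of_lt (by norm_num) hm]
    norm_num
    rw [Real.rpow_neg_one]
  have h1 : ENNReal.ofReal (∫ w in Set.Ioi m, w ^ (-2 : ℝ))
      = ∫⁻ w in Set.Ioi m, ENNReal.ofReal (w ^ (-2 : ℝ)) := by
    apply MeasureTheory.ofReal_integral_eq_lintegral_ofReal hint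
    filter_upwards [MeasureTheory.ae_restrict_mem measurableSet_Ioi] with w hw
    exact Real.rpow_nonneg (le_of_lt (hm.trans hw)) _
  have h2 : ∫⁻ w in Set.Ioi m, ENNReal.ofReal (w ^ (-2 : ℝ))
      = ∫⁻ w in Set.Ioi m, ENNReal.ofReal ((w ^ 2)⁻¹) := by
    apply MeasureTheory.setLIntegral_congr_fun measurableSet_Ioi
    intro w hw
    beta_reduce
    congr 1
    rw [Real.rpow_neg (le_of_lt (hm.trans hw)), Real.rpow_two]
  rw [← h2, ← h1, hval, ← ENNReal.ofReal_inv_of_pos hm]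

lemma inv_ofReal_max {a c : ℝ} :
    (ENNReal.ofReal (max a c))⁻¹
      = min (ENNReal.ofReal a)⁻¹ (ENNReal.ofReal c)⁻¹ := by
  rcases le_total a c with h | h
  · rw [max_eq_right h, min_eq_right]
    exact ENNReal.inv_le_inv.mpr (ENNReal.ofReal_le_ofReal h)
  · rw [max_eq_left h, min_eq_left]
    exact ENNReal.inv_le_inv.mpr (ENNReal.ofReal_le_ofReal h)

end Helpers2
section Helpers3

variable {X : Type*} [MeasurableSpace X]

lemma inv_ofReal_aμ (μ : MeasureTheory.Measure X) (hμ0 : μ ≠ 0) :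
    (ENNReal.ofReal ((μ Set.univ)⁻¹.toReal))⁻¹ = μ Set.univ := by
  have hpos : μ Set.univ ≠ 0 := by
    simpa [MeasureTheory.Measure.measure_univ_eq_zero] using hμ0
  have hfin : (μ Set.univ)⁻¹ ≠ ⊤ := by
    simpa [ENNReal.inv_eq_top] using hpos
  rw [ENNReal.ofReal_toReal hfin, inv_inv]

lemma key_fubini (μ : MeasureTheory.Measure X) (hμ0 : μ ≠ 0)
    {N : ℝ → ℝ} (hN : IsYoungOrlicz N) {k : ℝ} (hk : 0 < k) :
    ∫⁻ s in Set.Ioi (0:ℝ), Vfun μ N (k * Ninv N s) = Qfun μ N k := by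
  set a : ℝ := (μ Set.univ)⁻¹.toReal with ha_def
  have ha0 : 0 ≤ a := ENNReal.toReal_nonneg
  have haμ : (ENNReal.ofReal a)⁻¹ = μ Set.univ := inv_ofReal_aμ μ hμ0
  set f : ℝ → ℝ → ℝ≥0∞ := fun s w =>
    if N (k * Ninv N s) < w then ENNReal.ofReal ((w ^ 2)⁻¹) else 0 with hf_def
  have hcmeas : Measurable (fun s : ℝ => N (k * Ninv N s)) :=
    hN.continuous.measurable.comp ((measurable_const_mul k).comp hN.Ninv_measurable)
  -- inner integral over w
  have stepL : ∀ s ∈ Set.Ioi (0:ℝ),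
      ∫⁻ w in Set.Ioi a, f s w = Vfun μ N (k * Ninv N s) := by
    intro s hs
    have hs' : (0:ℝ) < s := hs
    set c : ℝ := N (k * Ninv N s) with hc_def
    have hcpos : 0 < c := hN.N_pos_s8 (mul_pos hk (hN.Ninv_pos hs'))
    have hind : ∀ w, f s w = (Set.Ioi c).indicator (fun w => ENNReal.ofReal ((w ^ 2)⁻¹)) w := by
      intro w
      simp [hf_def, Set.indicator_apply, Set.mem_Ioi]
      rfl
    calc ∫⁻ w in Set.Ioi a, f s w
        = ∫⁻ w in Set.Ioi a,
            (Set.Ioi c).indicator (fun w => ENNReal.ofReal ((w ^ 2)⁻¹)) w := by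
          simp only [hind]
      _ = ∫⁻ w in Set.Ioi c ∩ Set.Ioi a, ENNReal.ofReal ((w ^ 2)⁻¹) := by
          rw [MeasureTheory.lintegral_indicator measurableSet_Ioi,
            MeasureTheory.Measure.restrict_restrict measurableSet_Ioi]
      _ = ∫⁻ w in Set.Ioi (max c a), ENNReal.ofReal ((w ^ 2)⁻¹) := by
          rw [Set.Ioi_inter_Ioi]
      _ = (ENNReal.ofReal (max c a))⁻¹ :=
          lintegral_Ioi_inv_sq (lt_max_of_lt_left hcpos)
      _ = Vfun μ N (k * Ninv N s) := by
          rw [inv_ofReal_max, Vfun, ← hc_def, ← haμ, min_comm]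
  -- inner integral over s
  have stepR : ∀ w ∈ Set.Ioi a,
      ∫⁻ s in Set.Ioi (0:ℝ), f s w = ENNReal.ofReal (N (Ninv N w / k) / w ^ 2) := by
    intro w hw
    have hw' : a < w := hw
    have hwpos : 0 < w := lt_of_le_of_lt ha0 hw'
    set β : ℝ := N (Ninv N w / k) with hβ_def
    have hβpos : 0 < β := hN.N_pos_s8 (div_pos (hN.Ninv_pos hwpos) hk)
    have hset : {s : ℝ | N (k * Ninv N s) < w} ∩ Set.Ioi 0 = Set.Ioo 0 β := by
      ext s
      simp only [Set.mem_inter_iff, Set.mem_setOf_eq, Set.mem_Ioi, Set.mem_Ioo]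
      constructor
      · rintro ⟨h1, h2⟩
        refine ⟨h2, ?_⟩
        rw [← hN.Ninv_lt_iff (le_of_lt h2) (div_nonneg (Ninv_nonneg N w) (le_of_lt hk)),
          lt_div_iff₀ hk, mul_comm]
        rw [← hN.lt_Ninv_iff (le_of_lt hwpos)
          (mul_nonneg (le_of_lt hk) (Ninv_nonneg N s))] at h1
        linarith [h1]
      · rintro ⟨h2, h1⟩
        refine ⟨?_, h2⟩
        rw [← hN.Ninv_lt_iff (le_of_lt h2)
          (div_nonneg (Ninv_nonneg N w) (le_of_lt hk)), lt_div_iff₀ hk, mul_comm] at h1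
        rw [← hN.lt_Ninv_iff (le_of_lt hwpos)
          (mul_nonneg (le_of_lt hk) (Ninv_nonneg N s))]
        linarith [h1]
    have hind : ∀ s, f s w
        = {s : ℝ | N (k * Ninv N s) < w}.indicator
            (fun _ => ENNReal.ofReal ((w ^ 2)⁻¹)) s := by
      intro s
      simp [hf_def, Set.indicator_apply]
    calc ∫⁻ s in Set.Ioi (0:ℝ), f s w
        = ∫⁻ s in Set.Ioi (0:ℝ), {s : ℝ | N (k * Ninv N s) < w}.indicator
            (fun _ => ENNReal.ofReal ((w ^ 2)⁻¹)) s := by simp only [hind]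
      _ = ∫⁻ _ in {s : ℝ | N (k * Ninv N s) < w} ∩ Set.Ioi 0,
            ENNReal.ofReal ((w ^ 2)⁻¹) := by
          rw [MeasureTheory.lintegral_indicator (measurableSet_lt hcmeas measurable_const),
            MeasureTheory.Measure.restrict_restrict
              (measurableSet_lt hcmeas measurable_const)]
      _ = ENNReal.ofReal ((w ^ 2)⁻¹) * volume (Set.Ioo 0 β) := by
          rw [hset, MeasureTheory.setLIntegral_const]
      _ = ENNReal.ofReal (N (Ninv N w / k) / w ^ 2) := by
          rw [Real.volume_Ioo, sub_zero, ← ENNReal.ofReal_mul (by positivity),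
            ← hβ_def, div_eq_mul_inv, mul_comm]
  -- Fubini
  have hmeas : Measurable (Function.uncurry f) := by
    apply Measurable.ite
    · exact measurableSet_lt (hcmeas.comp measurable_fst) measurable_snd
    · exact ENNReal.measurable_ofReal.comp ((measurable_snd.pow_const 2).inv)
    · exact measurable_const
  have hswap := MeasureTheory.lintegral_lintegral_swap
    (μ := volume.restrict (Set.Ioi (0:ℝ))) (ν := volume.restrict (Set.Ioi a))
    hmeas.aemeasurable
  calc ∫⁻ s in Set.Ioi (0:ℝ), Vfun μ N (k * Ninv N s)
      = ∫⁻ s in Set.Ioi (0:ℝ), ∫⁻ w in Set.Ioi a, f s w := by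
        apply MeasureTheory.setLIntegral_congr_fun measurableSet_Ioi
        intro s hs
        exact (stepL s hs).symm
    _ = ∫⁻ w in Set.Ioi a, ∫⁻ s in Set.Ioi (0:ℝ), f s w := hswap
    _ = Qfun μ N k := by
        apply MeasureTheory.setLIntegral_congr_fun measurableSet_Ioi
        intro w hw
        exact stepR w hw

end Helpers3
section Helpers4

variable {X : Type*} [MeasurableSpace X]

lemma lintegral_N_eq_tail (μ : MeasureTheory.Measure X) {N : ℝ → ℝ} (hN : IsYoungOrlicz N)
    {f : X → ℝ} (hf : Measurable f) {c : ℝ} (hc : 0 < c) :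
    ∫⁻ x, ENNReal.ofReal (N (|f x| / c)) ∂μ
      = ∫⁻ s in Set.Ioi (0:ℝ), tailFun μ f (c * Ninv N s) := by
  rw [MeasureTheory.lintegral_eq_lintegral_meas_le μ
    (Filter.Eventually.of_forall fun x => hN.nonneg _)
    (hN.continuous.measurable.comp ((hf.abs).div_const c)).aemeasurable]
  apply MeasureTheory.setLIntegral_congr_fun measurableSet_Ioi
  intro s hs
  beta_reduce
  have hs' : (0:ℝ) < s := hs
  unfold tailFun
  congr 1
  ext x
  simp only [Set.mem_setOf_eq]
  rw [← hN.Ninv_le_iff (le_of_lt hs') (div_nonneg (abs_nonneg _) (le_of_lt hc)),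
    le_div_iff₀ hc, mul_comm]

lemma Qfun_lt_of_lt (μ : MeasureTheory.Measure X) {N : ℝ → ℝ} (hN : IsYoungOrlicz N)
    {k k₀ : ℝ} (hk : 0 < k) (hkk : k < k₀) (htop : Qfun μ N k₀ ≠ ⊤) :
    Qfun μ N k₀ < Qfun μ N k := by
  set a : ℝ := (μ Set.univ)⁻¹.toReal with ha_def
  have ha0 : 0 ≤ a := ENNReal.toReal_nonneg
  set p : ℝ → ℝ := fun w => N (Ninv N w / k₀) / w ^ 2 with hp_def
  set q : ℝ → ℝ := fun w => N (Ninv N w / k) / w ^ 2 with hq_def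
  have hk₀ : 0 < k₀ := hk.trans hkk
  have hlt : ∀ w ∈ Set.Ioi a, p w < q w := by
    intro w hw
    have hwpos : 0 < w := lt_of_le_of_lt ha0 hw
    have hnpos : 0 < Ninv N w := hN.Ninv_pos hwpos
    have harg : Ninv N w / k₀ < Ninv N w / k := div_lt_div_of_pos_left hnpos hk hkk
    have := hN.strictMonoOn (div_nonneg (le_of_lt hnpos) (le_of_lt hk₀))
      (div_nonneg (le_of_lt hnpos) (le_of_lt hk)) harg
    exact div_lt_div_of_pos_right this (by positivity)
  have hpmeas : Measurable fun w => ENNReal.ofReal (p w) :=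
    ENNReal.measurable_ofReal.comp
      ((hN.continuous.measurable.comp (hN.Ninv_measurable.div_const k₀)).div
        ((measurable_id.pow_const 2)))
  have hdmeas : Measurable fun w => ENNReal.ofReal (q w - p w) :=
    ENNReal.measurable_ofReal.comp
      (((hN.continuous.measurable.comp (hN.Ninv_measurable.div_const k)).div
        ((measurable_id.pow_const 2))).sub
        ((hN.continuous.measurable.comp (hN.Ninv_measurable.div_const k₀)).div
          ((measurable_id.pow_const 2))))
  have hsplit : Qfun μ N k
      = Qfun μ N k₀ + ∫⁻ w in Set.Ioi a, ENNReal.ofReal (q w - p w) := by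
    rw [Qfun, Qfun]
    rw [← MeasureTheory.lintegral_add_left hpmeas]
    apply MeasureTheory.setLIntegral_congr_fun measurableSet_Ioi
    intro w hw
    beta_reduce
    have h1 := hlt w hw
    have hpn : 0 ≤ p w := by
      apply div_nonneg (hN.nonneg _)
      positivity
    rw [← ENNReal.ofReal_add hpn (by linarith)]
    congr 1
    ring
  have hDpos : 0 < ∫⁻ w in Set.Ioi a, ENNReal.ofReal (q w - p w) := by
    rw [MeasureTheory.lintegral_pos_iff_support hdmeas]
    have hsupp : Set.Ioi a ⊆ Function.support fun w => ENNReal.ofReal (q w - p w) := by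
      intro w hw
      have := hlt w hw
      simp only [Function.mem_support, ne_eq, ENNReal.ofReal_eq_zero, not_le]
      linarith
    calc (0:ℝ≥0∞) < ⊤ := by simp
      _ = volume (Set.Ioi a) := (Real.volume_Ioi).symm
      _ = (volume.restrict (Set.Ioi a)) (Set.Ioi a) := by
          rw [MeasureTheory.Measure.restrict_apply measurableSet_Ioi, Set.inter_self]
      _ ≤ _ := MeasureTheory.measure_mono hsupp
  rw [hsplit]
  exact ENNReal.lt_add_right htop (ne_of_gt hDpos)

end Helpers4
section Helpers5

variable {X : Type*} [MeasurableSpace X]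

lemma weakNorm_g_eq_one (μ : MeasureTheory.Measure X) (hμ0 : μ ≠ 0)
    {N : ℝ → ℝ} (hN : IsYoungOrlicz N) {g : X → ℝ}
    (hTg : ∀ t : ℝ, 0 < t → tailFun μ g t = Vfun μ N t) :
    weakNorm μ N g = 1 := by
  have hmem : (1:ℝ) ∈ {K : ℝ | 0 < K ∧ ∀ t > 0, tailFun μ g t ≤ Vfun μ N (t / K)} := by
    refine ⟨one_pos, fun t ht => ?_⟩
    rw [hTg t ht, div_one]
  apply le_antisymm
  · calc weakNorm μ N g ≤ ENNReal.ofReal 1 := sInf_le (Set.mem_image_of_mem _ hmem)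
      _ = 1 := ENNReal.ofReal_one
  · apply le_sInf
    rintro x ⟨K, ⟨hK0, hKmem⟩, rfl⟩
    rw [← ENNReal.ofReal_one]
    apply ENNReal.ofReal_le_ofReal
    by_contra hlt
    push_neg at hlt
    have hpos : μ Set.univ ≠ 0 := by
      simpa [MeasureTheory.Measure.measure_univ_eq_zero] using hμ0
    have hfin : (μ Set.univ)⁻¹ ≠ ⊤ := by simpa [ENNReal.inv_eq_top] using hpos
    obtain ⟨M, hM⟩ := Filter.eventually_atTop.mp
      (hN.tendsto_atTop.eventually_gt_atTop ((μ Set.univ)⁻¹.toReal))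
    set t : ℝ := max 1 (K * M) with ht_def
    have ht : (0:ℝ) < t := lt_of_lt_of_le one_pos (le_max_left _ _)
    have htM : M ≤ t / K := by
      rw [le_div_iff₀ hK0]
      calc M * K = K * M := mul_comm _ _
        _ ≤ t := le_max_right _ _
    have hNt := hM _ htM
    have htK : t < t / K := by
      rw [lt_div_iff₀ hK0]
      exact mul_lt_of_lt_one_right ht hlt
    have h1 : ENNReal.ofReal (N t) < ENNReal.ofReal (N (t / K)) :=
      (ENNReal.ofReal_lt_ofReal_iff (hN.N_pos_s8 (div_pos ht hK0))).mpr
        (hN.strictMonoOn (le_of_lt ht) (le_of_lt (div_pos ht hK0)) htK)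
    have h2 : (μ Set.univ)⁻¹ < ENNReal.ofReal (N (t / K)) :=
      (ENNReal.lt_ofReal_iff_toReal_lt hfin).mpr hNt
    have h3 : (ENNReal.ofReal (N (t / K)))⁻¹ < μ Set.univ := by
      have := ENNReal.inv_lt_inv.mpr h2
      rwa [inv_inv] at this
    have h4 : (ENNReal.ofReal (N (t / K)))⁻¹ < (ENNReal.ofReal (N t))⁻¹ :=
      ENNReal.inv_lt_inv.mpr h1
    have hcontra : Vfun μ N (t / K) < Vfun μ N t := by
      calc Vfun μ N (t / K) ≤ (ENNReal.ofReal (N (t / K)))⁻¹ := min_le_right _ _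
        _ < min (μ Set.univ) (ENNReal.ofReal (N t))⁻¹ := lt_min h3 h4
        _ = Vfun μ N t := rfl
    have := hKmem t ht
    rw [hTg t ht] at this
    exact absurd this (not_le.mpr hcontra)

lemma weakNorm_pos (μ : MeasureTheory.Measure X)
    {N : ℝ → ℝ} (hN : IsYoungOrlicz N) {f : X → ℝ}
    (hne : ¬ f =ᵐ[μ] (0 : X → ℝ)) : weakNorm μ N f ≠ 0 := by
  intro h0
  apply hne
  have htail : ∀ t : ℝ, 0 < t → tailFun μ f t = 0 := by
    intro t ht
    -- first: tailFun f t ≤ (ofReal (N b))⁻¹ for every b > 0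
    have key : ∀ b : ℝ, 0 < b → tailFun μ f t ≤ (ENNReal.ofReal (N b))⁻¹ := by
      intro b hb
      have hsinf : weakNorm μ N f < ENNReal.ofReal (t / b) := by
        rw [h0]; exact ENNReal.ofReal_pos.mpr (div_pos ht hb)
      obtain ⟨x, hx, hxlt⟩ := sInf_lt_iff.mp hsinf
      obtain ⟨K, ⟨hK0, hKmem⟩, rfl⟩ := hx
      have hKlt : K < t / b :=
        (ENNReal.ofReal_lt_ofReal_iff_of_nonneg (le_of_lt hK0)).mp hxlt
      have hble : b ≤ t / K := by
        rw [le_div_iff₀ hK0]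
        calc b * K ≤ b * (t/b) := by nlinarith
          _ = t := by field_simp
      calc tailFun μ f t ≤ Vfun μ N (t / K) := hKmem t ht
        _ ≤ (ENNReal.ofReal (N (t / K)))⁻¹ := min_le_right _ _
        _ ≤ (ENNReal.ofReal (N b))⁻¹ := by
            apply ENNReal.inv_le_inv.mpr
            apply ENNReal.ofReal_le_ofReal
            exact hN.strictMonoOn.monotoneOn (le_of_lt hb)
              (le_trans (le_of_lt hb) hble) hble
    -- conclude tail = 0
    by_contra htne
    have htpos : 0 < tailFun μ f t := pos_iff_ne_zero.mpr htne
    obtain ⟨ε, hε0, hεlt⟩ := exists_between htpos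
    have hεinvfin : ε⁻¹ ≠ ⊤ := by simpa [ENNReal.inv_eq_top] using (ne_of_gt hε0)
    obtain ⟨b, hb1, hb2⟩ := ((hN.tendsto_atTop.eventually_gt_atTop (ε⁻¹).toReal).and
      (Filter.eventually_gt_atTop 0)).exists
    have h5 : ε⁻¹ < ENNReal.ofReal (N b) :=
      (ENNReal.lt_ofReal_iff_toReal_lt hεinvfin).mpr hb1
    have h6 : (ENNReal.ofReal (N b))⁻¹ < ε := by
      have := ENNReal.inv_lt_inv.mpr h5
      rwa [inv_inv] at this
    exact absurd (key b hb2) (not_le.mpr (lt_trans h6 hεlt))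
  -- tail zero for all t>0 ⇒ f = 0 a.e.
  have hnull : μ {x | f x ≠ 0} = 0 := by
    have hsub : {x | f x ≠ 0} ⊆ ⋃ n : ℕ, {x | 1/(n+1:ℝ) ≤ |f x|} := by
      intro x hx
      simp only [Set.mem_iUnion, Set.mem_setOf_eq]
      obtain ⟨n, hn⟩ := exists_nat_one_div_lt (abs_pos.mpr hx)
      exact ⟨n, le_of_lt hn⟩
    exact MeasureTheory.measure_mono_null hsub
      (MeasureTheory.measure_iUnion_null fun n => htail _ (by positivity))
  rw [Filter.EventuallyEq, MeasureTheory.ae_iff]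
  simpa using hnull

end Helpers5
theorem kZero_attained_and_Ynorm_eq
    {X : Type*} [MeasurableSpace X] (μ : MeasureTheory.Measure X) [SigmaFinite μ]
    (hμ0 : μ ≠ 0) (hatomless : Atomless μ)
    (N : ℝ → ℝ) (hN : IsYoungOrlicz N)
    (ν : MeasureTheory.Measure ℝ)
    (hν : ∀ t : ℝ, 0 < t → ν (Set.Ioi t) = Vfun μ N t)
    (hJ : ∃ C : ℝ, 0 < C ∧ ∫⁻ t in Set.Ioi (0:ℝ), ENNReal.ofReal (N (C * t)) ∂ν < ⊤)
    (k₀ : ℝ) (hk₀ : 1 < k₀) (hQ : Qfun μ N k₀ = 1)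
    (g : X → ℝ) (hg : Measurable g)
    (hTg : ∀ t : ℝ, 0 < t → tailFun μ g t = Vfun μ N t) :
    weakNorm μ N g = 1 ∧ strongNorm μ N g = ENNReal.ofReal k₀ ∧
      Ynorm μ N = ENNReal.ofReal k₀ := by
  have hk₀pos : (0:ℝ) < k₀ := lt_trans one_pos hk₀
  have hk₀ne : ENNReal.ofReal k₀ ≠ 0 := (ENNReal.ofReal_pos.mpr hk₀pos).ne'
  have hQtop : Qfun μ N k₀ ≠ ⊤ := by rw [hQ]; exact ENNReal.one_ne_top
  have hPhi_g : ∀ k : ℝ, 0 < k →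
      ∫⁻ x, ENNReal.ofReal (N (|g x| / k)) ∂μ = Qfun μ N k := by
    intro k hk
    rw [lintegral_N_eq_tail μ hN hg hk, ← key_fubini μ hμ0 hN hk]
    apply MeasureTheory.setLIntegral_congr_fun measurableSet_Ioi
    intro s hs
    exact hTg _ (mul_pos hk (hN.Ninv_pos hs))
  have hweak_g : weakNorm μ N g = 1 := weakNorm_g_eq_one μ hμ0 hN hTg
  have hstrong_g : strongNorm μ N g = ENNReal.ofReal k₀ := by
    apply le_antisymm
    · apply sInf_le
      exact Set.mem_image_of_mem _ ⟨hk₀pos, by rw [hPhi_g k₀ hk₀pos, hQ]⟩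
    · apply le_sInf
      rintro x ⟨k, ⟨hk0, hΦ⟩, rfl⟩
      apply ENNReal.ofReal_le_ofReal
      by_contra hlt
      push_neg at hlt
      have hQQ := Qfun_lt_of_lt μ hN hk0 hlt hQtop
      rw [hQ] at hQQ
      rw [hPhi_g k hk0] at hΦ
      exact absurd (lt_of_lt_of_le hQQ hΦ) (lt_irrefl _)
  have hupper : ∀ (f : X → ℝ), Measurable f →
      strongNorm μ N f ≤ ENNReal.ofReal k₀ * weakNorm μ N f := by
    intro f hf
    have hstep : ∀ K ∈ {K : ℝ | 0 < K ∧ ∀ t > 0, tailFun μ f t ≤ Vfun μ N (t / K)},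
        strongNorm μ N f ≤ ENNReal.ofReal (k₀ * K) := by
      rintro K ⟨hK0, hKmem⟩
      apply sInf_le
      refine Set.mem_image_of_mem _ ⟨mul_pos hk₀pos hK0, ?_⟩
      rw [lintegral_N_eq_tail μ hN hf (mul_pos hk₀pos hK0)]
      have hb : ∫⁻ s in Set.Ioi (0:ℝ), tailFun μ f (k₀ * K * Ninv N s)
          ≤ ∫⁻ s in Set.Ioi (0:ℝ), Vfun μ N (k₀ * Ninv N s) := by
        apply MeasureTheory.lintegral_mono_ae
        rw [MeasureTheory.ae_restrict_iff' measurableSet_Ioi]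
        filter_upwards with s hs
        have hNs : 0 < Ninv N s := hN.Ninv_pos hs
        have h1 := hKmem (k₀ * K * Ninv N s) (by positivity)
        have h2 : k₀ * K * Ninv N s / K = k₀ * Ninv N s := by
          field_simp
        rwa [h2] at h1
      calc ∫⁻ s in Set.Ioi (0:ℝ), tailFun μ f (k₀ * K * Ninv N s)
          ≤ ∫⁻ s in Set.Ioi (0:ℝ), Vfun μ N (k₀ * Ninv N s) := hb
        _ = Qfun μ N k₀ := key_fubini μ hμ0 hN hk₀pos
        _ = 1 := hQ
    have hdiv : strongNorm μ N f / ENNReal.ofReal k₀ ≤ weakNorm μ N f := by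
      apply le_sInf
      rintro x ⟨K, hKmem, rfl⟩
      rw [ENNReal.div_le_iff hk₀ne ENNReal.ofReal_ne_top]
      calc strongNorm μ N f ≤ ENNReal.ofReal (k₀ * K) := hstep K hKmem
        _ = ENNReal.ofReal K * ENNReal.ofReal k₀ := by
            rw [mul_comm k₀ K, ENNReal.ofReal_mul (le_of_lt hKmem.1)]
    rw [ENNReal.div_le_iff hk₀ne ENNReal.ofReal_ne_top] at hdiv
    rwa [mul_comm] at hdiv
  have hwne : weakNorm μ N g ≠ ⊤ := by rw [hweak_g]; exact ENNReal.one_ne_top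
  have hgne : ¬ g =ᵐ[μ] (0 : X → ℝ) := by
    intro hcontra
    have hnull : μ {x | g x ≠ 0} = 0 := by
      rw [Filter.EventuallyEq, MeasureTheory.ae_iff] at hcontra
      simpa using hcontra
    have h1 : tailFun μ g 1 = 0 :=
      MeasureTheory.measure_mono_null
        (fun x hx => by
          simp only [Set.mem_setOf_eq] at hx ⊢
          intro h0
          rw [h0, abs_zero] at hx
          linarith)
        hnull
    have h2 : 0 < tailFun μ g 1 := by
      rw [hTg 1 one_pos]
      apply lt_min
      · simpa [pos_iff_ne_zero, MeasureTheory.Measure.measure_univ_eq_zero] using hμ0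
      · simp [ENNReal.inv_pos]
    rw [h1] at h2
    exact lt_irrefl _ h2
  have hle : ENNReal.ofReal k₀ ≤ Ynorm μ N := by
    have heq : strongNorm μ N g / weakNorm μ N g = ENNReal.ofReal k₀ := by
      rw [hstrong_g, hweak_g, div_one]
    rw [← heq, Ynorm]
    apply le_iSup_of_le g
    apply le_iSup_of_le hg
    apply le_iSup_of_le hgne
    apply le_iSup_of_le hwne
    exact le_rfl
  have hge : Ynorm μ N ≤ ENNReal.ofReal k₀ := by
    rw [Ynorm]
    apply iSup_le; intro f
    apply iSup_le; intro hf
    apply iSup_le; intro hfne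
    apply iSup_le; intro hwtop
    rw [ENNReal.div_le_iff (weakNorm_pos μ hN hfne) hwtop]
    exact hupper f hf
  exact ⟨hweak_g, hstrong_g, le_antisymm hge hle⟩
end

section
/- Let μ be a probability measure (μ(X) = 1), m > 1, and N^{(m)}(u) = exp(|u|^m/m) − 1. Then for every k > 1, Q[N^{(m)}](k) = ∫₂^∞ (x^{k^{-m}} − 1)(x − 1)^{-2} dx = G(k^{-m}) − 1, where G(α) = ∫₀^{1/2} (1 − z)^{-2} z^{-α} dz. -/
open MeasureTheory ENNReal Set Filter Topology

section MyAux

lemma my_lintegral_image_eq {s : Set ℝ} {f f' : ℝ → ℝ}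
    (hs : MeasurableSet s) (hf' : ∀ x ∈ s, HasDerivWithinAt f (f' x) s x) (hf : Set.InjOn f s)
    (g : ℝ → ℝ≥0∞) :
    ∫⁻ x in f '' s, g x = ∫⁻ x in s, ENNReal.ofReal |f' x| * g (f x) := by
  simpa only [ContinuousLinearMap.det_toSpanSingleton] using
    MeasureTheory.lintegral_image_eq_lintegral_abs_det_fderiv_mul MeasureTheory.volume hs
      (fun x hx => (hf' x hx).hasFDerivWithinAt) hf g

lemma my_Ninv_exp_eq (m : ℝ) (hm : 1 < m) {w : ℝ} (hw : 0 ≤ w) :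
    Ninv (fun u : ℝ => Real.exp (|u| ^ m / m) - 1) w = (m * Real.log (1 + w)) ^ (1/m) := by
  have hm0 : (0:ℝ) < m := lt_trans one_pos hm
  set a : ℝ := m * Real.log (1 + w) with ha
  have hlog : 0 ≤ Real.log (1 + w) := Real.log_nonneg (by linarith)
  have ha0 : 0 ≤ a := by positivity
  set c : ℝ := a ^ (1/m) with hc
  have hc0 : 0 ≤ c := Real.rpow_nonneg ha0 _
  have hcm : c ^ m = a := by
    rw [hc, ← Real.rpow_mul ha0, one_div_mul_cancel (ne_of_gt hm0), Real.rpow_one]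
  have hNc : Real.exp (|c| ^ m / m) - 1 = w := by
    rw [abs_of_nonneg hc0, hcm, ha, mul_div_cancel_left₀ _ (ne_of_gt hm0),
      Real.exp_log (by linarith)]
    ring
  apply le_antisymm
  · exact csInf_le ⟨0, fun u hu => hu.1⟩ ⟨hc0, le_of_eq hNc.symm⟩
  · refine le_csInf ⟨c, hc0, le_of_eq hNc.symm⟩ ?_
    rintro u ⟨hu0, hwu⟩
    by_contra hlt
    push_neg at hlt
    have h1 : |u| ^ m < |c| ^ m := by
      rw [abs_of_nonneg hu0, abs_of_nonneg hc0]
      exact Real.rpow_lt_rpow hu0 hlt hm0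
    have h2 : Real.exp (|u| ^ m / m) - 1 < Real.exp (|c| ^ m / m) - 1 := by
      gcongr
    simp only at hwu
    linarith [hNc ▸ h2, hwu]

lemma my_rpow_neg_two {x : ℝ} (hx : 0 < x) : x ^ (-(2:ℝ)) = (x ^ 2)⁻¹ := by
  rw [Real.rpow_neg hx.le, show ((2:ℝ)) = ((2:ℕ):ℝ) by norm_num, Real.rpow_natCast]

lemma my_inv_image : Inv.inv '' Set.Ioo (0:ℝ) (1/2) = Set.Ioi (2:ℝ) := by
  ext x
  simp only [Set.mem_image, Set.mem_Ioo, Set.mem_Ioi]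
  constructor
  · rintro ⟨z, ⟨hz0, hz2⟩, rfl⟩
    have : (1/2 : ℝ)⁻¹ < z⁻¹ := by
      apply inv_strictAnti₀ hz0 hz2
    simpa using this
  · intro hx
    have hx0 : (0:ℝ) < x := by linarith
    refine ⟨x⁻¹, ⟨by positivity, ?_⟩, inv_inv x⟩
    have : x⁻¹ < (2:ℝ)⁻¹ := by
      apply inv_strictAnti₀ (by norm_num) hx
    simpa [one_div] using this

lemma my_add_image : (fun w : ℝ => w + 1) '' Set.Ioi (1:ℝ) = Set.Ioi (2:ℝ) := by
  ext x
  simp only [Set.mem_image, Set.mem_Ioi]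
  constructor
  · rintro ⟨w, hw, rfl⟩; linarith
  · intro hx; exact ⟨x - 1, by linarith, by ring⟩

lemma my_base_integral :
    ∫⁻ z in Set.Ioo (0:ℝ) (1/2), ENNReal.ofReal ((1 - z) ^ (-(2:ℝ))) = 1 := by
  have hcong : ∫⁻ z in Set.Ioo (0:ℝ) (1/2), ENNReal.ofReal ((1 - z) ^ (-(2:ℝ)))
      = ∫⁻ z in Set.Ioo (0:ℝ) (1/2), ENNReal.ofReal (((1 - z) ^ 2)⁻¹) := by
    apply MeasureTheory.setLIntegral_congr_fun measurableSet_Ioo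
    intro z hz
    dsimp only
    rw [my_rpow_neg_two (by cases hz; linarith)]
  rw [hcong]
  have hint : MeasureTheory.IntegrableOn (fun z : ℝ => ((1 - z) ^ 2)⁻¹)
      (Set.Ioo (0:ℝ) (1/2)) := by
    apply MeasureTheory.IntegrableOn.mono_set _ Set.Ioo_subset_Icc_self
    apply ContinuousOn.integrableOn_compact isCompact_Icc
    apply ContinuousOn.inv₀ (Continuous.continuousOn (by continuity))
    intro z hz
    have h2 : (0:ℝ) < 1 - z := by have := hz.2; linarith
    positivity
  rw [← MeasureTheory.ofReal_integral_eq_lintegral_ofReal hint]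
  · have h1 : ∫ z in Set.Ioo (0:ℝ) (1/2), ((1 - z) ^ 2)⁻¹
        = ∫ z in (0:ℝ)..(1/2), ((1 - z) ^ 2)⁻¹ := by
      rw [intervalIntegral.integral_of_le (by norm_num),
        MeasureTheory.integral_Ioc_eq_integral_Ioo]
    have h2 : ∫ z in (0:ℝ)..(1/2), ((1 - z) ^ 2)⁻¹ = (1 - (1/2:ℝ))⁻¹ - (1 - (0:ℝ))⁻¹ := by
      apply intervalIntegral.integral_eq_sub_of_hasDerivAt (f := fun z : ℝ => (1 - z)⁻¹)
      · intro x hx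
        rw [Set.uIcc_of_le (by norm_num)] at hx
        have hne : (1 - x) ≠ 0 := by
          have := hx.2; intro h; rw [sub_eq_zero] at h; norm_num [← h] at this
        have hd : HasDerivAt (fun z : ℝ => 1 - z) (-1) x := by
          simpa using (hasDerivAt_id x).const_sub 1
        have := hd.inv hne
        convert this using 1
        · rfl
        · rfl
        · rw [neg_neg, one_div]
      · apply ContinuousOn.intervalIntegrable
        apply ContinuousOn.inv₀ (Continuous.continuousOn (by continuity))
        intro x hx
        rw [Set.uIcc_of_le (by norm_num)] at hx
        have h2 : (0:ℝ) < 1 - x := by have := hx.2; linarith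
        positivity
    rw [h1, h2]
    norm_num
  · filter_upwards with z
    positivity

end MyAux

theorem Qfun_exponential_eq
    {X : Type*} [MeasurableSpace X] (μ : MeasureTheory.Measure X)
    [MeasureTheory.IsProbabilityMeasure μ]
    (m : ℝ) (hm : 1 < m) :
    ∀ k : ℝ, 1 < k →
      Qfun μ (fun u : ℝ => Real.exp (|u| ^ m / m) - 1) k =
        ∫⁻ x in Set.Ioi (2:ℝ),
          ENNReal.ofReal ((x ^ (k ^ (-m)) - 1) * (x - 1) ^ (-(2:ℝ))) ∧
      Qfun μ (fun u : ℝ => Real.exp (|u| ^ m / m) - 1) k = Gfun (k ^ (-m)) - 1 := by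
  intro k hk
  have hk0 : (0:ℝ) < k := lt_trans one_pos hk
  have hm0 : (0:ℝ) < m := lt_trans one_pos hm
  set α : ℝ := k ^ (-m) with hαdef
  have hα0 : 0 < α := Real.rpow_pos_of_pos hk0 _
  have step1 : Qfun μ (fun u : ℝ => Real.exp (|u| ^ m / m) - 1) k
      = ∫⁻ w in Set.Ioi (1:ℝ),
          ENNReal.ofReal (((w + 1) ^ α - 1) * ((w + 1) - 1) ^ (-(2:ℝ))) := by
    have huniv : ((μ Set.univ)⁻¹.toReal) = 1 := by simp
    rw [Qfun, huniv]
    apply MeasureTheory.setLIntegral_congr_fun measurableSet_Ioi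
    intro w hw
    dsimp only
    have hw0 : (0:ℝ) < w := lt_trans one_pos hw
    rw [my_Ninv_exp_eq m hm hw0.le]
    set c : ℝ := (m * Real.log (1 + w)) ^ (1/m) with hcdef
    have hlog : 0 ≤ Real.log (1 + w) := Real.log_nonneg (by linarith)
    have hc0 : 0 ≤ c := Real.rpow_nonneg (by positivity) _
    have hcm : c ^ m = m * Real.log (1 + w) := by
      rw [hcdef, ← Real.rpow_mul (by positivity), one_div_mul_cancel (ne_of_gt hm0),
        Real.rpow_one]
    have h1 : |c / k| ^ m = m * Real.log (1 + w) / k ^ m := by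
      rw [abs_of_nonneg (by positivity), Real.div_rpow hc0 hk0.le, hcm]
    have hkm : (0:ℝ) < k ^ m := Real.rpow_pos_of_pos hk0 m
    have hN : Real.exp (|c / k| ^ m / m) - 1 = (w + 1) ^ α - 1 := by
      rw [h1, Real.rpow_def_of_pos (by linarith : (0:ℝ) < w + 1)]
      congr 2
      rw [add_comm 1 w, hαdef, Real.rpow_neg hk0.le]
      field_simp
    have : (Real.exp (|c / k| ^ m / m) - 1) / w ^ 2
        = ((w + 1) ^ α - 1) * ((w + 1) - 1) ^ (-(2:ℝ)) := by
      rw [hN, show w + 1 - 1 = w by ring, my_rpow_neg_two hw0, div_eq_mul_inv]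
    rw [this]
  have step2 : ∫⁻ x in Set.Ioi (2:ℝ), ENNReal.ofReal ((x ^ α - 1) * (x - 1) ^ (-(2:ℝ)))
      = ∫⁻ w in Set.Ioi (1:ℝ),
          ENNReal.ofReal (((w + 1) ^ α - 1) * ((w + 1) - 1) ^ (-(2:ℝ))) := by
    have hd : ∀ x ∈ Set.Ioi (1:ℝ),
        HasDerivWithinAt (fun w : ℝ => w + 1) ((fun _ : ℝ => (1:ℝ)) x) (Set.Ioi 1) x := by
      intro x _
      exact ((hasDerivAt_id x).add_const 1).hasDerivWithinAt
    rw [← my_add_image,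
      my_lintegral_image_eq (f := fun w : ℝ => w + 1) (f' := fun _ => 1) measurableSet_Ioi
      hd ((add_left_injective (1:ℝ)).injOn) _]
    simp
  have step3 : ∫⁻ x in Set.Ioi (2:ℝ), ENNReal.ofReal ((x ^ α - 1) * (x - 1) ^ (-(2:ℝ)))
      = ∫⁻ z in Set.Ioo (0:ℝ) (1/2),
          (ENNReal.ofReal ((1 - z) ^ (-(2:ℝ)) * z ^ (-α))
            - ENNReal.ofReal ((1 - z) ^ (-(2:ℝ)))) := by
    rw [← my_inv_image,
      my_lintegral_image_eq (f := fun z : ℝ => z⁻¹) (f' := fun z => -(z ^ 2)⁻¹)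
      measurableSet_Ioo
      (fun z hz => (hasDerivAt_inv (ne_of_gt hz.1)).hasDerivWithinAt)
      (inv_injective.injOn) _]
    apply MeasureTheory.setLIntegral_congr_fun measurableSet_Ioo
    intro z hz
    dsimp only
    obtain ⟨hz0, hz2⟩ := hz
    have hz1 : (0:ℝ) < 1 - z := by linarith
    have habs : |(-(z ^ 2)⁻¹ : ℝ)| = (z ^ 2)⁻¹ := by
      rw [abs_neg, abs_of_pos (by positivity)]
    rw [habs, ← ENNReal.ofReal_mul (by positivity),
      ← ENNReal.ofReal_sub _ (Real.rpow_nonneg hz1.le _)]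
    congr 1
    have e1 : (z⁻¹ : ℝ) ^ α = z ^ (-α) := by
      rw [Real.inv_rpow hz0.le, ← Real.rpow_neg hz0.le]
    have e2 : (z⁻¹ - 1 : ℝ) = (1 - z) / z := by field_simp
    rw [e1, e2, my_rpow_neg_two (by positivity), my_rpow_neg_two hz1]
    have hzne : z ≠ 0 := ne_of_gt hz0
    have h1ne : (1 - z) ≠ 0 := ne_of_gt hz1
    field_simp
  have hBmeas : Measurable fun z : ℝ => ENNReal.ofReal ((1 - z) ^ (-(2:ℝ))) := by
    fun_prop
  have hsub : ∫⁻ z in Set.Ioo (0:ℝ) (1/2),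
      (ENNReal.ofReal ((1 - z) ^ (-(2:ℝ)) * z ^ (-α))
        - ENNReal.ofReal ((1 - z) ^ (-(2:ℝ)))) = Gfun α - 1 := by
    rw [MeasureTheory.lintegral_sub hBmeas]
    · rw [my_base_integral]; rfl
    · rw [my_base_integral]; exact one_ne_top
    · filter_upwards [MeasureTheory.ae_restrict_mem measurableSet_Ioo] with z hz
      apply ENNReal.ofReal_le_ofReal
      have h1 : (1:ℝ) ≤ z ^ (-α) :=
        Real.one_le_rpow_of_pos_of_le_one_of_nonpos hz.1 (by linarith [hz.2])
          (by linarith)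
      exact le_mul_of_one_le_right (Real.rpow_nonneg (by linarith [hz.2]) _) h1
  exact ⟨step1.trans step2.symm, by rw [step1, ← step2, step3, hsub]⟩
end
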